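/- arXiv:1701.06201 — 5 statements merged into one kernel-verified Lean document; each statement's English description precedes it below -/
import Mathlib

section
/- Let 1 ≤ s < t and 0 < τ < 1, and set T = ⌊τN⌋. For every probability vector p = (p₀,…,p_t) (p_k ≥ 0, Σ p_k = 1), the error probability of the τ-weight decision rule satisfies ε_s(p, τ-WDR, X) ≤ max{ |B¹_s(T,X)|/C(t,s), |B²_{s+1}(T,X)|/C(t,s+1) }, and equality holds for every p with p_s > 0, p_{s+1} > 0 and p_s + p_{s+1} = 1. Consequently the maximum over all p of ε_s(p, τ-WDR, X) is attained at any such p. -/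
/-- Response vector `x(S)`: componentwise Boolean OR of the columns `x(j)`, `j ∈ S`. -/
def resp {N t : ℕ} (X : Fin t → Fin N → Bool) (S : Finset (Fin t)) : Fin N → Bool :=
  fun i => decide (∃ j ∈ S, X j i = true)

/-- Hamming weight of a binary vector. -/
def wt {N : ℕ} (v : Fin N → Bool) : ℕ :=
  (Finset.univ.filter fun i => v i = true).card

/-- `B¹_k(T,X) = {S ⊆ [t] : |S| = k, |x(S)| ≥ T+1}`. -/
def B1 {N t : ℕ} (X : Fin t → Fin N → Bool) (k T : ℕ) : Finset (Finset (Fin t)) :=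
  Finset.univ.filter fun S => S.card = k ∧ T + 1 ≤ wt (resp X S)

/-- `B²_k(T,X) = {S ⊆ [t] : |S| = k, |x(S)| ≤ T}`. -/
def B2 {N t : ℕ} (X : Fin t → Fin N → Bool) (k T : ℕ) : Finset (Finset (Fin t)) :=
  Finset.univ.filter fun S => S.card = k ∧ wt (resp X S) ≤ T

/-- The error probability `ε_s(p, τ-WDR, X)` of the `τ`-weight decision rule with
threshold `T = ⌊τN⌋`, for a probability vector `p = (p_0, …, p_t)`.  A term whose
normalizing sum `Σ p_l` vanishes is `0`, which is the Lean convention `x / 0 = 0`. -/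
noncomputable def epsWDR {N t : ℕ} (X : Fin t → Fin N → Bool) (s T : ℕ) (p : ℕ → ℝ) : ℝ :=
  max
    (∑ k ∈ Finset.range (s + 1),
      (p k / ∑ l ∈ Finset.range (s + 1), p l) * (((B1 X k T).card : ℝ) / (t.choose k : ℝ)))
    (∑ k ∈ Finset.Icc (s + 1) t,
      (p k / ∑ l ∈ Finset.Icc (s + 1) t, p l) * (((B2 X k T).card : ℝ) / (t.choose k : ℝ)))

lemma wt_mono {N t : ℕ} (X : Fin t → Fin N → Bool) {S S' : Finset (Fin t)} (h : S ⊆ S') :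
    wt (resp X S) ≤ wt (resp X S') := by
  apply Finset.card_le_card
  intro i hi
  simp only [Finset.mem_filter, Finset.mem_univ, true_and, resp, decide_eq_true_eq] at *
  obtain ⟨j, hj, hx⟩ := hi
  exact ⟨j, h hj, hx⟩

lemma B1_count {N t : ℕ} (X : Fin t → Fin N → Bool) (T k : ℕ) :
    (B1 X k T).card * (t - k) ≤ (B1 X (k+1) T).card * (k+1) := by
  apply Finset.card_mul_le_card_mul (fun S S' => S ⊆ S')
  · intro S hS
    simp only [B1, Finset.mem_filter, Finset.mem_univ, true_and] at hS
    rw [Finset.bipartiteAbove]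
    have : Sᶜ.card ≤ (Finset.filter (fun S' => S ⊆ S') (B1 X (k+1) T)).card := by
      apply Finset.card_le_card_of_injOn (fun a => insert a S)
      · intro a ha
        simp only [Finset.mem_coe, Finset.mem_compl] at ha
        simp only [Finset.mem_coe, Finset.mem_filter, B1, Finset.mem_univ, true_and]
        refine ⟨⟨?_, ?_⟩, Finset.subset_insert _ _⟩
        · rw [Finset.card_insert_of_notMem ha, hS.1]
        · exact le_trans hS.2 (wt_mono X (Finset.subset_insert _ _))
      · intro a ha b hb hab
        simp only [Finset.mem_coe, Finset.mem_compl] at ha hb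
        have hab' : insert a S = insert b S := hab
        have : a ∈ insert b S := hab' ▸ Finset.mem_insert_self a S
        rcases Finset.mem_insert.1 this with h | h
        · exact h
        · exact absurd h ha
    calc t - k = Sᶜ.card := by
          rw [Finset.card_compl, hS.1]; simp
      _ ≤ _ := this
  · intro S' hS'
    simp only [B1, Finset.mem_filter, Finset.mem_univ, true_and] at hS'
    rw [Finset.bipartiteBelow]
    have h1 : (Finset.filter (fun S => S ⊆ S') (B1 X k T)) ⊆ S'.powersetCard k := by
      intro S hS
      simp only [Finset.mem_filter, B1, Finset.mem_univ, true_and] at hS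
      rw [Finset.mem_powersetCard]
      exact ⟨hS.2, hS.1.1⟩
    calc (Finset.filter (fun S => S ⊆ S') (B1 X k T)).card
        ≤ (S'.powersetCard k).card := Finset.card_le_card h1
      _ = (k+1).choose k := by rw [Finset.card_powersetCard, hS'.1]
      _ = k + 1 := Nat.choose_succ_self_right k

lemma B2_count {N t : ℕ} (X : Fin t → Fin N → Bool) (T k : ℕ) :
    (B2 X (k+1) T).card * (k+1) ≤ (B2 X k T).card * (t - k) := by
  apply Finset.card_mul_le_card_mul (fun S' S => S ⊆ S')
  · intro S' hS'
    simp only [B2, Finset.mem_filter, Finset.mem_univ, true_and] at hS'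
    rw [Finset.bipartiteAbove]
    have h1 : S'.powersetCard k ⊆ (Finset.filter (fun S => S ⊆ S') (B2 X k T)) := by
      intro S hS
      rw [Finset.mem_powersetCard] at hS
      simp only [Finset.mem_filter, B2, Finset.mem_univ, true_and]
      exact ⟨⟨hS.2, le_trans (wt_mono X hS.1) hS'.2⟩, hS.1⟩
    calc k + 1 = (k+1).choose k := (Nat.choose_succ_self_right k).symm
      _ = (S'.powersetCard k).card := by rw [Finset.card_powersetCard, hS'.1]
      _ ≤ _ := Finset.card_le_card h1
  · intro S hS
    simp only [B2, Finset.mem_filter, Finset.mem_univ, true_and] at hS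
    rw [Finset.bipartiteBelow]
    have h1 : (Finset.filter (fun S' => S ⊆ S') (B2 X (k+1) T)) ⊆ Sᶜ.image (fun a => insert a S) := by
      intro S' hS'
      simp only [Finset.mem_filter, B2, Finset.mem_univ, true_and] at hS'
      have hsub : S ⊆ S' := hS'.2
      have hcard : (S' \ S).card = 1 := by
        rw [Finset.card_sdiff_of_subset hsub, hS'.1.1, hS.1]; omega
      obtain ⟨a, ha⟩ := Finset.card_eq_one.1 hcard
      have haS : a ∉ S := by
        have : a ∈ S' \ S := ha ▸ Finset.mem_singleton_self a
        exact (Finset.mem_sdiff.1 this).2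
      have : S' = insert a S := by
        rw [← Finset.union_sdiff_of_subset hsub, ha, Finset.union_comm, ← Finset.insert_eq]
      rw [Finset.mem_image]
      exact ⟨a, Finset.mem_compl.2 haS, this.symm⟩
    calc (Finset.filter (fun S' => S ⊆ S') (B2 X (k+1) T)).card
        ≤ (Sᶜ.image (fun a => insert a S)).card := Finset.card_le_card h1
      _ ≤ Sᶜ.card := Finset.card_image_le
      _ = t - k := by rw [Finset.card_compl, hS.1]; simp

lemma ratio_step {t k a b : ℕ} (hk : k < t) (h : a * (t - k) ≤ b * (k+1)) :
    (a : ℝ) / (t.choose k : ℝ) ≤ (b : ℝ) / (t.choose (k+1) : ℝ) := by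
  have hc1 : 0 < t.choose k := Nat.choose_pos (le_of_lt hk)
  have hc2 : 0 < t.choose (k+1) := Nat.choose_pos hk
  rw [div_le_div_iff₀ (by exact_mod_cast hc1) (by exact_mod_cast hc2)]
  have key : a * t.choose (k+1) ≤ b * t.choose k := by
    have h2 : a * t.choose (k+1) * (k+1) ≤ b * t.choose k * (k+1) := by
      calc a * t.choose (k+1) * (k+1) = a * (t.choose (k+1) * (k+1)) := by ring
        _ = a * (t.choose k * (t - k)) := by rw [Nat.choose_succ_right_eq]
        _ = a * (t - k) * t.choose k := by ring
        _ ≤ b * (k+1) * t.choose k := Nat.mul_le_mul_right _ h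
        _ = b * t.choose k * (k+1) := by ring
    exact Nat.le_of_mul_le_mul_right h2 (Nat.succ_pos k)
  exact_mod_cast key

lemma ratio_step2 {t k a b : ℕ} (hk : k < t) (h : b * (k+1) ≤ a * (t - k)) :
    (b : ℝ) / (t.choose (k+1) : ℝ) ≤ (a : ℝ) / (t.choose k : ℝ) := by
  have hc1 : 0 < t.choose k := Nat.choose_pos (le_of_lt hk)
  have hc2 : 0 < t.choose (k+1) := Nat.choose_pos hk
  rw [div_le_div_iff₀ (by exact_mod_cast hc2) (by exact_mod_cast hc1)]
  have key : b * t.choose k ≤ a * t.choose (k+1) := by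
    have h2 : b * t.choose k * (t - k) ≤ a * t.choose (k+1) * (t - k) := by
      calc b * t.choose k * (t - k) = b * (t.choose (k+1) * (k+1)) := by
            rw [Nat.choose_succ_right_eq]; ring
        _ = b * (k+1) * t.choose (k+1) := by ring
        _ ≤ a * (t - k) * t.choose (k+1) := Nat.mul_le_mul_right _ h
        _ = a * t.choose (k+1) * (t - k) := by ring
    exact Nat.le_of_mul_le_mul_right h2 (by omega)
  exact_mod_cast key

lemma r1_mono {N t : ℕ} (X : Fin t → Fin N → Bool) (T : ℕ) {k j : ℕ} (hkj : k ≤ j)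
    (hjt : j ≤ t) :
    ((B1 X k T).card : ℝ) / (t.choose k : ℝ) ≤ ((B1 X j T).card : ℝ) / (t.choose j : ℝ) := by
  induction j, hkj using Nat.le_induction with
  | base => exact le_refl _
  | succ j hkj ih =>
    exact le_trans (ih (by omega)) (ratio_step (by omega) (B1_count X T j))

lemma r2_anti {N t : ℕ} (X : Fin t → Fin N → Bool) (T : ℕ) {k j : ℕ} (hkj : k ≤ j)
    (hjt : j ≤ t) :
    ((B2 X j T).card : ℝ) / (t.choose j : ℝ) ≤ ((B2 X k T).card : ℝ) / (t.choose k : ℝ) := by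
  induction j, hkj using Nat.le_induction with
  | base => exact le_refl _
  | succ j hkj ih =>
    exact le_trans (ratio_step2 (by omega) (B2_count X T j)) (ih (by omega))

lemma sum_div_le (F : Finset ℕ) (p v : ℕ → ℝ) (hp : ∀ k ∈ F, 0 ≤ p k) (M : ℝ) (hM : 0 ≤ M)
    (hvM : ∀ k ∈ F, v k ≤ M) :
    ∑ k ∈ F, (p k / ∑ l ∈ F, p l) * v k ≤ M := by
  set P := ∑ l ∈ F, p l with hPdef
  by_cases hP : P = 0
  · simp only [hP, div_zero, zero_mul, Finset.sum_const_zero]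
    exact hM
  · have hPpos : 0 < P := lt_of_le_of_ne (Finset.sum_nonneg hp) (Ne.symm hP)
    calc ∑ k ∈ F, (p k / P) * v k ≤ ∑ k ∈ F, (p k / P) * M :=
          Finset.sum_le_sum fun k hk =>
            mul_le_mul_of_nonneg_left (hvM k hk) (div_nonneg (hp k hk) hPpos.le)
      _ = (∑ k ∈ F, p k) / P * M := by rw [Finset.sum_div, Finset.sum_mul]
      _ = M := by rw [← hPdef, div_self hP, one_mul]

/-- the error probability of the `τ`-weight decision rule is at most
`max{|B¹_s(T,X)|/C(t,s), |B²_{s+1}(T,X)|/C(t,s+1)}` for every probability vector `p`,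
with equality when `p_s > 0`, `p_{s+1} > 0` and `p_s + p_{s+1} = 1`; consequently the
maximum over `p` is attained at any such `p`. -/
theorem stmt_1 {N t : ℕ} (X : Fin t → Fin N → Bool) (s : ℕ) (hs : 1 ≤ s) (hst : s < t)
    (τ : ℝ) (hτ0 : 0 < τ) (hτ1 : τ < 1) :
    (∀ p : ℕ → ℝ, (∀ k, 0 ≤ p k) → (∑ k ∈ Finset.range (t + 1), p k) = 1 →
      epsWDR X s ⌊τ * N⌋₊ p ≤
        max (((B1 X s ⌊τ * N⌋₊).card : ℝ) / (t.choose s : ℝ))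
          (((B2 X (s + 1) ⌊τ * N⌋₊).card : ℝ) / (t.choose (s + 1) : ℝ))) ∧
    (∀ p : ℕ → ℝ, (∀ k, 0 ≤ p k) → (∑ k ∈ Finset.range (t + 1), p k) = 1 →
      0 < p s → 0 < p (s + 1) → p s + p (s + 1) = 1 →
      epsWDR X s ⌊τ * N⌋₊ p =
        max (((B1 X s ⌊τ * N⌋₊).card : ℝ) / (t.choose s : ℝ))
          (((B2 X (s + 1) ⌊τ * N⌋₊).card : ℝ) / (t.choose (s + 1) : ℝ))) ∧
    (∀ p : ℕ → ℝ, (∀ k, 0 ≤ p k) → (∑ k ∈ Finset.range (t + 1), p k) = 1 →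
      0 < p s → 0 < p (s + 1) → p s + p (s + 1) = 1 →
      ∀ p' : ℕ → ℝ, (∀ k, 0 ≤ p' k) → (∑ k ∈ Finset.range (t + 1), p' k) = 1 →
        epsWDR X s ⌊τ * N⌋₊ p' ≤ epsWDR X s ⌊τ * N⌋₊ p) := by
  set T := ⌊τ * N⌋₊ with hT
  set A : ℝ := ((B1 X s T).card : ℝ) / (t.choose s : ℝ) with hA
  set B : ℝ := ((B2 X (s + 1) T).card : ℝ) / (t.choose (s + 1) : ℝ) with hB
  have hA0 : 0 ≤ A := by positivity
  have hB0 : 0 ≤ B := by positivity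
  have part1 : ∀ p : ℕ → ℝ, (∀ k, 0 ≤ p k) → (∑ k ∈ Finset.range (t + 1), p k) = 1 →
      epsWDR X s T p ≤ max A B := by
    intro p hp hsum
    have h1 : (∑ k ∈ Finset.range (s + 1),
        (p k / ∑ l ∈ Finset.range (s + 1), p l) * (((B1 X k T).card : ℝ) / (t.choose k : ℝ)))
        ≤ A := by
      apply sum_div_le _ _ _ (fun k _ => hp k) _ hA0
      intro k hk
      rw [Finset.mem_range] at hk
      exact r1_mono X T (by omega) (le_of_lt hst)
    have h2 : (∑ k ∈ Finset.Icc (s + 1) t,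
        (p k / ∑ l ∈ Finset.Icc (s + 1) t, p l) * (((B2 X k T).card : ℝ) / (t.choose k : ℝ)))
        ≤ B := by
      apply sum_div_le _ _ _ (fun k _ => hp k) _ hB0
      intro k hk
      rw [Finset.mem_Icc] at hk
      exact r2_anti X T hk.1 hk.2
    exact max_le_max h1 h2
  have part2 : ∀ p : ℕ → ℝ, (∀ k, 0 ≤ p k) → (∑ k ∈ Finset.range (t + 1), p k) = 1 →
      0 < p s → 0 < p (s + 1) → p s + p (s + 1) = 1 →
      epsWDR X s T p = max A B := by
    intro p hp hsum hps hps1 hpsum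
    have hzero : ∀ k, k ≤ t → k ≠ s → k ≠ s + 1 → p k = 0 := by
      have hsub : ({s, s + 1} : Finset ℕ) ⊆ Finset.range (t + 1) := by
        intro x hx
        simp only [Finset.mem_insert, Finset.mem_singleton] at hx
        rw [Finset.mem_range]; omega
      have hpair : ∑ k ∈ ({s, s + 1} : Finset ℕ), p k = 1 := by
        rw [Finset.sum_pair (by omega : s ≠ s + 1)]; exact hpsum
      have hdiff : ∑ k ∈ Finset.range (t + 1) \ ({s, s + 1} : Finset ℕ), p k = 0 := by
        have := Finset.sum_sdiff (f := p) hsub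
        rw [hpair, hsum] at this
        linarith
      intro k hk1 hk2 hk3
      refine (Finset.sum_eq_zero_iff_of_nonneg (fun k _ => hp k)).1 hdiff k ?_
      rw [Finset.mem_sdiff, Finset.mem_range]
      simp only [Finset.mem_insert, Finset.mem_singleton]
      omega
    have hsum1 : ∑ l ∈ Finset.range (s + 1), p l = p s := by
      apply Finset.sum_eq_single_of_mem s (Finset.self_mem_range_succ s)
      intro k hk hks
      rw [Finset.mem_range] at hk
      exact hzero k (by omega) hks (by omega)
    have hsum2 : ∑ l ∈ Finset.Icc (s + 1) t, p l = p (s + 1) := by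
      apply Finset.sum_eq_single_of_mem (s + 1) (by rw [Finset.mem_Icc]; omega)
      intro k hk hks
      rw [Finset.mem_Icc] at hk
      exact hzero k hk.2 (by omega) hks
    have e1 : (∑ k ∈ Finset.range (s + 1),
        (p k / ∑ l ∈ Finset.range (s + 1), p l) * (((B1 X k T).card : ℝ) / (t.choose k : ℝ)))
        = A := by
      rw [hsum1]
      rw [Finset.sum_eq_single_of_mem s (Finset.self_mem_range_succ s)]
      · rw [div_self (ne_of_gt hps), one_mul]
      · intro k hk hks
        rw [Finset.mem_range] at hk
        rw [hzero k (by omega) hks (by omega), zero_div, zero_mul]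
    have e2 : (∑ k ∈ Finset.Icc (s + 1) t,
        (p k / ∑ l ∈ Finset.Icc (s + 1) t, p l) * (((B2 X k T).card : ℝ) / (t.choose k : ℝ)))
        = B := by
      rw [hsum2]
      rw [Finset.sum_eq_single_of_mem (s + 1) (by rw [Finset.mem_Icc]; omega)]
      · rw [div_self (ne_of_gt hps1), one_mul]
      · intro k hk hks
        rw [Finset.mem_Icc] at hk
        rw [hzero k hk.2 (by omega) hks, zero_div, zero_mul]
    unfold epsWDR
    rw [e1, e2]
  refine ⟨part1, part2, ?_⟩
  intro p hp hsum hps hps1 hpsum p' hp' hsum'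
  rw [part2 p hp hsum hps hps1 hpsum]
  exact part1 p' hp' hsum'
end

section
/- Let 1 ≤ s < t, let X be a binary N×t matrix, and let y ∈ {0,1}^N be such that n_s(y,X) > 0. Set β := n_s(y,X)/C(t,s). Then n_{s+1}(y,X) ≥ ( β^{(s+1)/s}·t/(t−s) − β·s/(t−s) )·C(t,s+1). -/
open Finset

theorem choose_pow_le (s : ℕ) : ∀ m t : ℕ, m ≤ t →
    m.choose s * t ^ s ≤ t.choose s * m ^ s := by
  induction s with
  | zero => intro m t _; simp
  | succ s ih =>
    intro m t hmt
    have h1 := ih m t hmt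
    have h2 : (m - s) * t ≤ (t - s) * m := by
      rcases le_or_gt m s with h | h
      · simp [Nat.sub_eq_zero_of_le h]
      · have h3 : s * m ≤ s * t := Nat.mul_le_mul_left s hmt
        calc (m - s) * t = t * m - s * t := by rw [Nat.sub_mul, Nat.mul_comm]
          _ ≤ t * m - s * m := Nat.sub_le_sub_left h3 _
          _ = (t - s) * m := by rw [Nat.sub_mul]
    have key : (m.choose s * (m - s)) * (t ^ s * t) ≤ (t.choose s * (t - s)) * (m ^ s * m) := by
      calc (m.choose s * (m - s)) * (t ^ s * t) = (m.choose s * t ^ s) * ((m - s) * t) := by ring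
        _ ≤ (t.choose s * m ^ s) * ((t - s) * m) := Nat.mul_le_mul h1 h2
        _ = (t.choose s * (t - s)) * (m ^ s * m) := by ring
    rw [← Nat.choose_succ_right_eq, ← Nat.choose_succ_right_eq] at key
    have h4 : (m.choose (s+1) * t ^ (s+1)) * (s+1) ≤ (t.choose (s+1) * m ^ (s+1)) * (s+1) := by
      calc (m.choose (s+1) * t ^ (s+1)) * (s+1) = (m.choose (s+1) * (s+1)) * (t ^ s * t) := by ring
        _ ≤ (t.choose (s+1) * (s+1)) * (m ^ s * m) := key
        _ = (t.choose (s+1) * m ^ (s+1)) * (s+1) := by ring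
    exact Nat.le_of_mul_le_mul_right h4 (Nat.succ_pos s)

def nresp {N t : ℕ} (X : Fin t → Fin N → Bool) (k : ℕ) (y : Fin N → Bool) : ℕ :=
  (Finset.univ.filter fun S : Finset (Fin t) => S.card = k ∧ resp X S = y).card

theorem resp_insert {N t : ℕ} (X : Fin t → Fin N → Bool) (S : Finset (Fin t)) (j : Fin t)
    (i : Fin N) : resp X (insert j S) i = (X j i || resp X S i) := by
  simp [resp, Finset.mem_insert, exists_eq_or_imp]

-- good-column set
def goodJ {N t : ℕ} (X : Fin t → Fin N → Bool) (y : Fin N → Bool) : Finset (Fin t) :=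
  Finset.univ.filter fun j => ∀ i, X j i = true → y i = true

theorem subset_goodJ {N t : ℕ} {X : Fin t → Fin N → Bool} {y : Fin N → Bool}
    {S : Finset (Fin t)} (hS : resp X S = y) : S ⊆ goodJ X y := by
  intro j hj
  simp only [goodJ, mem_filter, mem_univ, true_and]
  intro i hXj
  have : resp X S i = true := by
    simp [resp]; exact ⟨j, hj, hXj⟩
  rw [hS] at this; exact this

theorem insert_mem {N t : ℕ} {X : Fin t → Fin N → Bool} {y : Fin N → Bool}
    {S : Finset (Fin t)} (hS : resp X S = y) {j : Fin t} (hj : j ∈ goodJ X y) :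
    resp X (insert j S) = y := by
  funext i
  rw [resp_insert, hS]
  cases hXj : X j i with
  | false => simp
  | true =>
    simp only [goodJ, mem_filter, mem_univ, true_and] at hj
    simp [hj i hXj]

-- counting step: n_s * (|J| - s) ≤ n_{s+1} * (s+1)
theorem count_step {N t : ℕ} (X : Fin t → Fin N → Bool) (y : Fin N → Bool) (s : ℕ) :
    nresp X s y * ((goodJ X y).card - s) ≤ (s + 1) * nresp X (s + 1) y := by
  classical
  set J := goodJ X y with hJ
  set A := Finset.univ.filter fun S : Finset (Fin t) => S.card = s ∧ resp X S = y with hA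
  set B := Finset.univ.filter
    fun S : Finset (Fin t) => S.card = s + 1 ∧ resp X S = y with hB
  set P := A.sigma (fun S => J \ S) with hP
  have hcardP : P.card = A.card * (J.card - s) := by
    rw [hP, Finset.card_sigma]
    have hterm : ∀ S ∈ A, (J \ S).card = J.card - s := by
      intro S hS
      simp only [hA, mem_filter, mem_univ, true_and] at hS
      rw [Finset.card_sdiff_of_subset (subset_goodJ hS.2), hS.1]
    rw [Finset.sum_congr rfl hterm, Finset.sum_const, smul_eq_mul]
  have hmain : P.card ≤ (s + 1) * B.card := by
    apply Finset.card_le_mul_card_image_of_maps_to (f := fun p => insert p.2 p.1)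
    · rintro ⟨S, j⟩ hp
      rw [hP, Finset.mem_sigma] at hp
      obtain ⟨hSA, hjS⟩ := hp
      simp only [hA, mem_filter, mem_univ, true_and] at hSA
      rw [Finset.mem_sdiff] at hjS
      simp only [hB, mem_filter, mem_univ, true_and]
      exact ⟨by rw [Finset.card_insert_of_notMem hjS.2, hSA.1],
        insert_mem hSA.2 hjS.1⟩
    · intro T hT
      simp only [hB, mem_filter, mem_univ, true_and] at hT
      have := Finset.card_le_card_of_injOn (f := fun p : (_ : Finset (Fin t)) × Fin t => p.2)
        (s := Finset.filter (fun p : (_ : Finset (Fin t)) × Fin t => insert p.2 p.1 = T) P)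
        (t := T) ?_ ?_
      · rw [hT.1] at this; exact this
      · rintro ⟨S, j⟩ hp
        rw [Finset.mem_coe, Finset.mem_filter] at hp
        rw [← hp.2]
        exact Finset.mem_insert_self _ _
      · rintro ⟨S, j⟩ hp ⟨S', j'⟩ hq (hjj : j = j')
        rw [Finset.mem_coe, Finset.mem_filter, hP, Finset.mem_sigma, Finset.mem_sdiff] at hp hq
        have hS : S = T.erase j := by
          rw [← hp.2, Finset.erase_insert hp.1.2.2]
        have hS' : S' = T.erase j' := by
          rw [← hq.2, Finset.erase_insert hq.1.2.2]
        subst hjj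
        have : S = S' := by rw [hS, hS']
        subst this
        rfl
  calc nresp X s y * (J.card - s) = P.card := hcardP.symm
    _ ≤ (s + 1) * B.card := hmain
    _ = (s + 1) * nresp X (s + 1) y := rfl

theorem nresp_le {N t : ℕ} (X : Fin t → Fin N → Bool) (y : Fin N → Bool) (s : ℕ) :
    nresp X s y ≤ (goodJ X y).card.choose s := by
  classical
  rw [← Finset.card_powersetCard s (goodJ X y)]
  apply Finset.card_le_card
  intro S hS
  simp only [nresp, mem_filter, mem_univ, true_and] at hS
  rw [Finset.mem_powersetCard]
  exact ⟨subset_goodJ hS.2, hS.1⟩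

theorem card_goodJ_ge {N t : ℕ} {X : Fin t → Fin N → Bool} {y : Fin N → Bool} {s : ℕ}
    (hpos : 0 < nresp X s y) : s ≤ (goodJ X y).card := by
  rw [nresp, Finset.card_pos] at hpos
  obtain ⟨S, hS⟩ := hpos
  simp only [mem_filter, mem_univ, true_and] at hS
  rw [← hS.1]
  exact Finset.card_le_card (subset_goodJ hS.2)

/-- if `n_s(y,X) > 0` and `β = n_s(y,X)/C(t,s)`, then
`n_{s+1}(y,X) ≥ (β^{(s+1)/s}·t/(t−s) − β·s/(t−s))·C(t,s+1)`. -/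
theorem stmt_6 {N t : ℕ} (s : ℕ) (hs : 1 ≤ s) (hst : s < t)
    (X : Fin t → Fin N → Bool) (y : Fin N → Bool) (hpos : 0 < nresp X s y) :
    (((nresp X s y : ℝ) / (t.choose s : ℝ)) ^ (((s : ℝ) + 1) / (s : ℝ))
          * (t : ℝ) / ((t : ℝ) - (s : ℝ))
        - ((nresp X s y : ℝ) / (t.choose s : ℝ)) * (s : ℝ) / ((t : ℝ) - (s : ℝ)))
        * (t.choose (s + 1) : ℝ) ≤
      (nresp X (s + 1) y : ℝ) := by
  classical
  set m : ℕ := (goodJ X y).card with hm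
  have hsm : s ≤ m := card_goodJ_ge hpos
  have hmt : m ≤ t := by
    have := Finset.card_le_univ (goodJ X y)
    simpa using this
  have hs0 : (s : ℝ) ≠ 0 := by positivity
  have hsR : (0:ℝ) < s := by exact_mod_cast hs
  have htR : (0:ℝ) < t := by have : 0 < t := Nat.zero_lt_of_lt hst; exact_mod_cast this
  have hts : (0:ℝ) < (t:ℝ) - s := by
    have : (s:ℝ) < t := by exact_mod_cast hst
    linarith
  have hc : (0:ℝ) < (t.choose s : ℝ) := by
    exact_mod_cast Nat.choose_pos (le_of_lt hst)
  have ha : (0:ℝ) < (nresp X s y : ℝ) := by exact_mod_cast hpos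
  set β : ℝ := (nresp X s y : ℝ) / (t.choose s : ℝ) with hβdef
  have hβ : 0 < β := div_pos ha hc
  -- β ≤ (m/t)^s
  have hβm : β ≤ ((m:ℝ)/t) ^ (s:ℕ) := by
    have h1 : (nresp X s y : ℝ) ≤ (m.choose s : ℝ) := by exact_mod_cast nresp_le X y s
    have h2 : (m.choose s : ℝ) * (t:ℝ)^(s:ℕ) ≤ (t.choose s : ℝ) * (m:ℝ)^(s:ℕ) := by
      exact_mod_cast choose_pow_le s m t hmt
    rw [hβdef, div_pow, div_le_div_iff₀ hc (by positivity)]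
    calc (nresp X s y : ℝ) * (t:ℝ)^(s:ℕ) ≤ (m.choose s : ℝ) * (t:ℝ)^(s:ℕ) := by
          apply mul_le_mul_of_nonneg_right h1 (by positivity)
      _ ≤ (t.choose s : ℝ) * (m:ℝ)^(s:ℕ) := h2
      _ = (m:ℝ)^(s:ℕ) * (t.choose s : ℝ) := by ring
  -- root bound
  have hroot : β ^ ((1:ℝ)/s) ≤ (m:ℝ)/t := by
    have h := Real.rpow_le_rpow (le_of_lt hβ) hβm (by positivity : (0:ℝ) ≤ 1/(s:ℝ))
    rwa [← Real.rpow_natCast ((m:ℝ)/t) s, ← Real.rpow_mul (by positivity),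
      mul_one_div, div_self hs0, Real.rpow_one] at h
  have hrt : β ^ ((1:ℝ)/s) * t ≤ (m:ℝ) := by
    calc β ^ ((1:ℝ)/s) * t ≤ ((m:ℝ)/t) * t := by
          apply mul_le_mul_of_nonneg_right hroot (le_of_lt htR)
      _ = (m:ℝ) := by field_simp
  -- exponent split
  have hsplit : β ^ (((s:ℝ)+1)/s) = β * β ^ ((1:ℝ)/s) := by
    rw [show ((s:ℝ)+1)/s = 1 + 1/(s:ℝ) by field_simp, Real.rpow_add hβ, Real.rpow_one]
  -- choose identity
  have hchoose : (t.choose (s+1) : ℝ) * ((s:ℝ)+1) = (t.choose s : ℝ) * ((t:ℝ) - s) := by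
    have := Nat.choose_succ_right_eq t s
    have hcast : ((t.choose (s+1) * (s+1) : ℕ) : ℝ) = ((t.choose s * (t - s) : ℕ) : ℝ) := by
      exact_mod_cast this
    push_cast [Nat.cast_sub (le_of_lt hst)] at hcast
    linarith [hcast]
  have hβc : β * (t.choose s : ℝ) = (nresp X s y : ℝ) :=
    div_mul_cancel₀ _ (ne_of_gt hc)
  -- counting inequality
  have hcount : (nresp X s y : ℝ) * ((m:ℝ) - s) ≤ ((s:ℝ)+1) * (nresp X (s+1) y : ℝ) := by
    have := count_step X y s
    have hcast : ((nresp X s y * (m - s) : ℕ) : ℝ) ≤ (((s+1) * nresp X (s+1) y : ℕ) : ℝ) := by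
      exact_mod_cast this
    push_cast [Nat.cast_sub hsm] at hcast
    linarith [hcast]
  rw [hsplit]
  set r : ℝ := β ^ ((1:ℝ)/s) with hr
  have key : (β * r * (t:ℝ) / ((t:ℝ) - s) - β * s / ((t:ℝ) - s)) * (t.choose (s+1) : ℝ)
      = (nresp X s y : ℝ) * (r * t - s) / ((s:ℝ)+1) := by
    have hs1 : ((s:ℝ)+1) ≠ 0 := by positivity
    field_simp
    linear_combination (β * (r * (t:ℝ) - s)) * hchoose + ((r * (t:ℝ) - s) * ((t:ℝ) - s)) * hβc
  rw [key]
  rw [div_le_iff₀ (by positivity : (0:ℝ) < (s:ℝ)+1)]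
  calc (nresp X s y : ℝ) * (r * (t:ℝ) - s)
      ≤ (nresp X s y : ℝ) * ((m:ℝ) - s) := by
        apply mul_le_mul_of_nonneg_left _ (le_of_lt ha)
        linarith [hrt]
    _ ≤ ((s:ℝ)+1) * (nresp X (s+1) y : ℝ) := hcount
    _ = (nresp X (s+1) y : ℝ) * ((s:ℝ)+1) := by ring
end

section
/- Let k ≥ 2 be an integer and 0 < Q < 1. As a function of q, A(k,Q,q) is strictly decreasing on the interval (Q, 1−(1−Q)^k], strictly increasing on the interval [1−(1−Q)^k, min{1, kQ}), and equals 0 at the point q = 1−(1−Q)^k. -/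
open Real Set Finset

noncomputable def qf (k : ℕ) (Q y : ℝ) : ℝ := Q * (1 - y ^ k) / (1 - y)

lemma geom_aux (y : ℝ) (k : ℕ) : (∑ i ∈ Finset.range k, y ^ i) * (1 - y) = 1 - y ^ k := by
  have := geom_sum_mul y k; nlinarith [this]

lemma qf_sum (k : ℕ) (Q : ℝ) {y : ℝ} (hy : y ≠ 1) :
    qf k Q y = Q * ∑ i ∈ Finset.range k, y ^ i := by
  have h1 : (1:ℝ) - y ≠ 0 := sub_ne_zero.mpr (Ne.symm hy)
  have h := geom_aux y k
  rw [qf, ← h]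
  field_simp

lemma qf_strictMonoOn (k : ℕ) (hk : 2 ≤ k) {Q : ℝ} (hQ0 : 0 < Q) :
    StrictMonoOn (qf k Q) (Set.Ico 0 1) := by
  intro y1 hy1 y2 hy2 h
  rw [qf_sum k Q (ne_of_lt hy1.2), qf_sum k Q (ne_of_lt hy2.2)]
  apply mul_lt_mul_of_pos_left _ hQ0
  apply Finset.sum_lt_sum
  · exact fun i _ => pow_le_pow_left₀ hy1.1 h.le i
  · exact ⟨1, Finset.mem_range.mpr (by omega), by simpa using h⟩

lemma qf_zero (k : ℕ) (hk : 2 ≤ k) (Q : ℝ) : qf k Q 0 = Q := by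
  simp [qf, zero_pow (by omega : k ≠ 0)]

lemma qf_oneSubQ (k : ℕ) {Q : ℝ} (hQ0 : 0 < Q) :
    qf k Q (1 - Q) = 1 - (1 - Q) ^ k := by
  rw [qf]
  have : (1:ℝ) - (1 - Q) = Q := by ring
  rw [this]
  field_simp

noncomputable def dqf (k : ℕ) (Q y : ℝ) : ℝ :=
  Q * ((1 - y ^ k) - (k : ℝ) * y ^ (k - 1) * (1 - y)) / (1 - y) ^ 2

lemma hasDerivAt_qf (k : ℕ) (Q : ℝ) {y : ℝ} (hy : y ≠ 1) :
    HasDerivAt (qf k Q) (dqf k Q y) y := by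
  have h1 : (1:ℝ) - y ≠ 0 := sub_ne_zero.mpr (Ne.symm hy)
  have hnum : HasDerivAt (fun z : ℝ => Q * (1 - z ^ k)) (Q * (-((k:ℝ) * y ^ (k-1)))) y := by
    have := (hasDerivAt_pow k y)
    have h2 : HasDerivAt (fun z : ℝ => 1 - z ^ k) (-((k:ℝ) * y ^ (k-1))) y := by
      exact this.const_sub 1
    simpa [mul_comm] using h2.const_mul Q
  have hden : HasDerivAt (fun z : ℝ => 1 - z) (-1 : ℝ) y := by
    exact (hasDerivAt_id' y).const_sub 1
  have := hnum.div hden h1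
  refine this.congr_deriv ?_
  symm
  rw [dqf]
  field_simp
  ring

lemma dqf_pos (k : ℕ) (hk : 2 ≤ k) {Q y : ℝ} (hQ0 : 0 < Q) (hy0 : 0 < y) (hy1 : y < 1) :
    0 < dqf k Q y := by
  have h1 : (0:ℝ) < 1 - y := by linarith
  have hsum : 0 < ∑ i ∈ Finset.range k, (y ^ i - y ^ (k - 1)) := by
    apply Finset.sum_pos'
    · intro i hi
      have : i ≤ k - 1 := by have := Finset.mem_range.mp hi; omega
      exact sub_nonneg.mpr (pow_le_pow_of_le_one hy0.le hy1.le this)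
    · refine ⟨0, Finset.mem_range.mpr (by omega), ?_⟩
      simpa using pow_lt_one₀ hy0.le hy1 (by omega : k - 1 ≠ 0)
  have hkey : (1 - y ^ k) - (k : ℝ) * y ^ (k - 1) * (1 - y)
      = (1 - y) * ∑ i ∈ Finset.range k, (y ^ i - y ^ (k - 1)) := by
    rw [Finset.sum_sub_distrib, Finset.sum_const, Finset.card_range]
    have := geom_aux y k
    simp only [nsmul_eq_mul]
    rw [mul_comm (1-y) _, sub_mul, this]
  rw [dqf, hkey]
  positivity

lemma qf_lt_one_of_le (k : ℕ) (hk : 2 ≤ k) {Q y : ℝ} (hQ0 : 0 < Q) (hQ1 : Q < 1)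
    (hy0 : 0 ≤ y) (hy : y ≤ 1 - Q) : qf k Q y < 1 := by
  have h2 : qf k Q y ≤ qf k Q (1 - Q) := by
    rcases eq_or_lt_of_le hy with h | h
    · rw [h]
    · exact ((qf_strictMonoOn k hk hQ0) ⟨hy0, by linarith⟩ ⟨by linarith, by linarith⟩ h).le
  rw [qf_oneSubQ k hQ0] at h2
  have : (0:ℝ) < (1 - Q) ^ k := pow_pos (by linarith) k
  linarith

lemma exists_root (k : ℕ) (hk : 2 ≤ k) {Q q : ℝ} (hQ0 : 0 < Q) (hQ1 : Q < 1)
    (h1 : Q < q) (h2 : q < (k : ℝ) * Q) : ∃ y ∈ Set.Ioo (0:ℝ) 1, qf k Q y = q := by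
  -- find b < 1 with q < qf b
  have hcont : ContinuousAt (fun y : ℝ => Q * ∑ i ∈ Finset.range k, y ^ i) 1 := by
    fun_prop
  have hval : Q * ∑ i ∈ Finset.range k, (1:ℝ) ^ i = (k : ℝ) * Q := by
    simp [mul_comm]
  have hev : ∀ᶠ y in nhds (1:ℝ), q < Q * ∑ i ∈ Finset.range k, y ^ i := by
    have hq1 : q < Q * ∑ i ∈ Finset.range k, (1:ℝ) ^ i := by rw [hval]; exact h2
    have := hcont.eventually_mem (Ioi_mem_nhds hq1)
    simpa using this
  have hev2 : ∀ᶠ y in nhdsWithin (1:ℝ) (Set.Iio 1),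
      (q < Q * ∑ i ∈ Finset.range k, y ^ i ∧ 0 < y) ∧ y < 1 :=
    (((hev.filter_mono nhdsWithin_le_nhds).and
      ((eventually_gt_nhds (by norm_num : (0:ℝ) < 1)).filter_mono nhdsWithin_le_nhds)).and
      eventually_mem_nhdsWithin)
  obtain ⟨b, ⟨hbq, hb0⟩, hb1⟩ := hev2.exists
  have hb : b ∈ Set.Ioo (0:ℝ) 1 := ⟨hb0, hb1⟩
  have hqb : q < qf k Q b := by rw [qf_sum k Q (ne_of_lt hb.2)]; exact hbq
  -- IVT on [0, b]
  have hc : ContinuousOn (qf k Q) (Set.Icc 0 b) := by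
    apply ContinuousOn.div
    · fun_prop
    · fun_prop
    · intro z hz
      have : z < 1 := lt_of_le_of_lt hz.2 hb.2
      exact sub_ne_zero.mpr (by linarith)
  have := intermediate_value_Ioo (le_of_lt hb.1) hc
  have hq0 : qf k Q 0 = Q := qf_zero k hk Q
  have hmem : q ∈ Set.Ioo (qf k Q 0) (qf k Q b) := by rw [hq0]; exact ⟨h1, hqb⟩
  obtain ⟨y, hy, hyq⟩ := this hmem
  exact ⟨y, ⟨hy.1, lt_trans hy.2 hb.2⟩, hyq⟩


/-- `y(k,Q,q)`: the unique root `y ∈ (0,1)` of `q = Q(1−y^k)/(1−y)` (realized as the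
supremum of the solution set, which is a singleton in the considered range). -/
noncomputable def rootY (k : ℕ) (Q q : ℝ) : ℝ :=
  sSup {y : ℝ | y ∈ Set.Ioo (0 : ℝ) 1 ∧ q = Q * (1 - y ^ k) / (1 - y)}

/-- Binary entropy `h(Q) = −Q log₂ Q − (1−Q) log₂(1−Q)`. -/
noncomputable def binH (Q : ℝ) : ℝ :=
  -Q * Real.logb 2 Q - (1 - Q) * Real.logb 2 (1 - Q)

/-- `A(k,Q,q) = (1−q)log₂(1−q) + q log₂[Q y^k/(1−y)] + kQ log₂[(1−y)/y] + k·h(Q)`,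
where `y = y(k,Q,q)` is the unique root of `q = Q(1−y^k)/(1−y)` in `(0,1)`. -/
noncomputable def funA (k : ℕ) (Q q : ℝ) : ℝ :=
  (1 - q) * Real.logb 2 (1 - q)
    + q * Real.logb 2 (Q * rootY k Q q ^ k / (1 - rootY k Q q))
    + (k : ℝ) * Q * Real.logb 2 ((1 - rootY k Q q) / rootY k Q q)
    + (k : ℝ) * binH Q

lemma rootY_qf (k : ℕ) (hk : 2 ≤ k) {Q y : ℝ} (hQ0 : 0 < Q) (hy : y ∈ Set.Ioo (0:ℝ) 1) :
    rootY k Q (qf k Q y) = y := by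
  have hset : {y' : ℝ | y' ∈ Set.Ioo (0:ℝ) 1 ∧ qf k Q y = Q * (1 - y' ^ k) / (1 - y')} = {y} := by
    ext z
    simp only [Set.mem_setOf_eq, Set.mem_singleton_iff]
    constructor
    · rintro ⟨hz, heq⟩
      have heq' : qf k Q z = qf k Q y := heq.symm
      exact (qf_strictMonoOn k hk hQ0).injOn ⟨hz.1.le, hz.2⟩ ⟨hy.1.le, hy.2⟩ heq'
    · rintro rfl
      exact ⟨hy, rfl⟩
  rw [rootY, hset, csSup_singleton]

noncomputable def Psi (k : ℕ) (Q y : ℝ) : ℝ :=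
  (1 - qf k Q y) * Real.logb 2 (1 - qf k Q y)
    + qf k Q y * Real.logb 2 (Q * y ^ k / (1 - y))
    + (k : ℝ) * Q * Real.logb 2 ((1 - y) / y)
    + (k : ℝ) * binH Q

lemma funA_qf (k : ℕ) (hk : 2 ≤ k) {Q y : ℝ} (hQ0 : 0 < Q) (hy : y ∈ Set.Ioo (0:ℝ) 1) :
    funA k Q (qf k Q y) = Psi k Q y := by
  rw [funA, Psi, rootY_qf k hk hQ0 hy]

noncomputable def Nf (k : ℕ) (Q y : ℝ) : ℝ :=
  ((1 - qf k Q y) * Real.log (1 - qf k Q y)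
    + qf k Q y * (Real.log Q + (k : ℝ) * Real.log y - Real.log (1 - y))
    + (k : ℝ) * Q * (Real.log (1 - y) - Real.log y)) / Real.log 2
    + (k : ℝ) * binH Q

lemma Psi_eq_Nf (k : ℕ) {Q y : ℝ} (hQ0 : 0 < Q) (hy0 : 0 < y) (hy1 : y < 1) :
    Psi k Q y = Nf k Q y := by
  have h1y : (1:ℝ) - y ≠ 0 := ne_of_gt (by linarith)
  have hyk : y ^ k ≠ 0 := by positivity
  rw [Psi, Nf, Real.logb, Real.logb, Real.logb,
    Real.log_div (by positivity) h1y, Real.log_mul (ne_of_gt hQ0) hyk, Real.log_pow,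
    Real.log_div h1y (ne_of_gt hy0)]
  ring

noncomputable def dPsi (k : ℕ) (Q y : ℝ) : ℝ :=
  dqf k Q y * (Real.log Q + (k : ℝ) * Real.log y - Real.log (1 - y)
    - Real.log (1 - qf k Q y)) / Real.log 2

set_option maxHeartbeats 1000000 in
lemma hasDerivAt_Nf (k : ℕ) (hk : 2 ≤ k) {Q y : ℝ} (hQ0 : 0 < Q) (hy0 : 0 < y) (hy1 : y < 1)
    (hq1 : qf k Q y ≠ 1) : HasDerivAt (Nf k Q) (dPsi k Q y) y := by
  have h1y : (1:ℝ) - y ≠ 0 := ne_of_gt (by linarith)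
  have h1q : (1:ℝ) - qf k Q y ≠ 0 := sub_ne_zero.mpr (Ne.symm hq1)
  have hq : HasDerivAt (qf k Q) (dqf k Q y) y := hasDerivAt_qf k Q (ne_of_lt hy1)
  have h1mq : HasDerivAt (fun z => 1 - qf k Q z) (-dqf k Q y) y := by
    exact hq.const_sub 1
  have hlog1mq : HasDerivAt (fun z => Real.log (1 - qf k Q z)) (-dqf k Q y / (1 - qf k Q y)) y :=
    h1mq.log h1q
  have hA : HasDerivAt (fun z => (1 - qf k Q z) * Real.log (1 - qf k Q z))
      ((-dqf k Q y) * Real.log (1 - qf k Q y) + (1 - qf k Q y) * (-dqf k Q y / (1 - qf k Q y))) y :=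
    h1mq.mul hlog1mq
  have hlogy : HasDerivAt (fun z : ℝ => Real.log z) y⁻¹ y := Real.hasDerivAt_log (ne_of_gt hy0)
  have h1my : HasDerivAt (fun z : ℝ => 1 - z) (-1 : ℝ) y := by
    exact (hasDerivAt_id' y).const_sub 1
  have hlog1my : HasDerivAt (fun z : ℝ => Real.log (1 - z)) (-1 / (1 - y)) y := h1my.log h1y
  have hBin : HasDerivAt (fun z : ℝ => Real.log Q + (k:ℝ) * Real.log z - Real.log (1 - z))
      (0 + (k:ℝ) * y⁻¹ - (-1 / (1 - y))) y :=
    ((hasDerivAt_const y (Real.log Q)).add (hlogy.const_mul (k:ℝ))).sub hlog1my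
  have hB : HasDerivAt
      (fun z => qf k Q z * (Real.log Q + (k:ℝ) * Real.log z - Real.log (1 - z)))
      (dqf k Q y * (Real.log Q + (k:ℝ) * Real.log y - Real.log (1 - y))
        + qf k Q y * (0 + (k:ℝ) * y⁻¹ - (-1 / (1 - y)))) y := hq.mul hBin
  have hC : HasDerivAt (fun z : ℝ => (k:ℝ) * Q * (Real.log (1 - z) - Real.log z))
      ((k:ℝ) * Q * (-1 / (1 - y) - y⁻¹)) y := by
    have := (hlog1my.sub hlogy).const_mul ((k:ℝ) * Q)
    simpa [mul_sub] using this
  have htot := (((hA.add hB).add hC).div_const (Real.log 2)).add_const ((k:ℝ) * binH Q)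
  have heq : Nf k Q = fun z => ((1 - qf k Q z) * Real.log (1 - qf k Q z)
      + qf k Q z * (Real.log Q + (k : ℝ) * Real.log z - Real.log (1 - z))
      + (k : ℝ) * Q * (Real.log (1 - z) - Real.log z)) / Real.log 2 + (k : ℝ) * binH Q := rfl
  rw [heq]
  refine htot.congr_deriv ?_
  symm
  rw [dPsi]
  -- algebraic identity
  obtain ⟨m, rfl⟩ : ∃ m, k = m + 2 := ⟨k - 2, by omega⟩
  generalize Real.log (1 - qf (m+2) Q y) = L4
  rw [qf, dqf] at *
  rw [show m + 2 - 1 = m + 1 from rfl] at *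
  congr 1
  clear htot hA hB hC hBin hlog1mq h1mq hq heq hq1
  have h1q' : ((1:ℝ) - y) - Q * (1 - y ^ (m+2)) ≠ 0 := by
    intro h
    apply h1q
    have hd : Q * (1 - y ^ (m+2)) / (1 - y) = 1 := by
      rw [div_eq_iff h1y]; linarith
    rw [hd]; ring
  have hrw : 1 - Q * (1 - y ^ (m+2)) / (1 - y) = (1 - y - Q * (1 - y ^ (m+2))) / (1 - y) := by
    field_simp
  rw [hrw]
  field_simp
  ring

lemma hasDerivAt_Psi (k : ℕ) (hk : 2 ≤ k) {Q y : ℝ} (hQ0 : 0 < Q) (hy0 : 0 < y) (hy1 : y < 1)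
    (hq1 : qf k Q y ≠ 1) : HasDerivAt (Psi k Q) (dPsi k Q y) y := by
  apply (hasDerivAt_Nf k hk hQ0 hy0 hy1 hq1).congr_of_eventuallyEq
  have hmem : Set.Ioo (0:ℝ) 1 ∈ nhds y := Ioo_mem_nhds hy0 hy1
  filter_upwards [hmem] with z hz
  exact Psi_eq_Nf k hQ0 hz.1 hz.2

-- the key quantity:  (1-y)*(1 - qf y) - Q*y^k = 1 - y - Q
lemma key_diff (k : ℕ) {Q y : ℝ} (hy1 : y < 1) :
    (1 - y) * (1 - qf k Q y) - Q * y ^ k = 1 - y - Q := by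
  have h1y : (1:ℝ) - y ≠ 0 := ne_of_gt (by linarith)
  rw [qf]
  field_simp
  ring

lemma bracket_neg (k : ℕ) {Q y : ℝ} (hQ0 : 0 < Q) (hy0 : 0 < y) (hy1 : y < 1 - Q) :
    Real.log Q + (k : ℝ) * Real.log y - Real.log (1 - y) - Real.log (1 - qf k Q y) < 0 := by
  have hy1' : y < 1 := by linarith
  have h1 : Real.log Q + (k:ℝ) * Real.log y = Real.log (Q * y ^ k) := by
    rw [Real.log_mul (ne_of_gt hQ0) (by positivity), Real.log_pow]
  have h2 : Real.log (1 - y) + Real.log (1 - qf k Q y)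
      = Real.log ((1 - y) * (1 - qf k Q y)) := by
    rw [Real.log_mul]
    · exact ne_of_gt (by linarith)
    · have := key_diff k (Q := Q) hy1'
      have hpos : (0:ℝ) < Q * y ^ k := by positivity
      nlinarith
  have hlt : Q * y ^ k < (1 - y) * (1 - qf k Q y) := by
    have := key_diff k (Q := Q) hy1'
    linarith
  have := Real.log_lt_log (by positivity : (0:ℝ) < Q * y ^ k) hlt
  linarith [h1, h2, this]

lemma bracket_pos (k : ℕ) {Q y : ℝ} (hQ0 : 0 < Q) (hy0 : 0 < y) (hy1 : y < 1)
    (hyQ : 1 - Q < y) (hq1 : qf k Q y < 1) :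
    0 < Real.log Q + (k : ℝ) * Real.log y - Real.log (1 - y) - Real.log (1 - qf k Q y) := by
  have h1 : Real.log Q + (k:ℝ) * Real.log y = Real.log (Q * y ^ k) := by
    rw [Real.log_mul (ne_of_gt hQ0) (by positivity), Real.log_pow]
  have h2 : Real.log (1 - y) + Real.log (1 - qf k Q y)
      = Real.log ((1 - y) * (1 - qf k Q y)) := by
    rw [Real.log_mul (ne_of_gt (by linarith)) (ne_of_gt (by linarith))]
  have hlt : (1 - y) * (1 - qf k Q y) < Q * y ^ k := by
    have := key_diff k (Q := Q) hy1
    linarith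
  have hpos : (0:ℝ) < (1 - y) * (1 - qf k Q y) := by
    apply mul_pos <;> linarith
  have := Real.log_lt_log hpos hlt
  linarith [h1, h2, this]

lemma dPsi_neg (k : ℕ) (hk : 2 ≤ k) {Q y : ℝ} (hQ0 : 0 < Q) (hy0 : 0 < y) (hy1 : y < 1 - Q) :
    dPsi k Q y < 0 := by
  rw [dPsi]
  apply div_neg_of_neg_of_pos _ (Real.log_pos (by norm_num))
  exact mul_neg_of_pos_of_neg (dqf_pos k hk hQ0 hy0 (by linarith)) (bracket_neg k hQ0 hy0 hy1)

lemma dPsi_pos (k : ℕ) (hk : 2 ≤ k) {Q y : ℝ} (hQ0 : 0 < Q) (hy0 : 0 < y) (hy1 : y < 1)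
    (hyQ : 1 - Q < y) (hq1 : qf k Q y < 1) : 0 < dPsi k Q y := by
  rw [dPsi]
  apply div_pos _ (Real.log_pos (by norm_num))
  exact mul_pos (dqf_pos k hk hQ0 hy0 hy1) (bracket_pos k hQ0 hy0 hy1 hyQ hq1)

lemma qf_le_of_le (k : ℕ) (hk : 2 ≤ k) {Q a b : ℝ} (hQ0 : 0 < Q) (ha : 0 ≤ a) (hb : b < 1)
    (hab : a ≤ b) : qf k Q a ≤ qf k Q b :=
  (qf_strictMonoOn k hk hQ0).monotoneOn ⟨ha, by linarith⟩ ⟨by linarith, hb⟩ hab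

lemma Psi_anti (k : ℕ) (hk : 2 ≤ k) {Q y1 y2 : ℝ} (hQ0 : 0 < Q) (hQ1 : Q < 1)
    (hy0 : 0 < y1) (h12 : y1 < y2) (hy2 : y2 ≤ 1 - Q) : Psi k Q y2 < Psi k Q y1 := by
  have hlt1 : ∀ z ∈ Set.Icc y1 y2, qf k Q z < 1 := fun z hz =>
    qf_lt_one_of_le k hk hQ0 hQ1 (by linarith [hz.1]) (by linarith [hz.2])
  have hd : ∀ z ∈ Set.Icc y1 y2, HasDerivAt (Psi k Q) (dPsi k Q z) z := fun z hz =>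
    hasDerivAt_Psi k hk hQ0 (by linarith [hz.1]) (by linarith [hz.2]) (ne_of_lt (hlt1 z hz))
  have hanti : StrictAntiOn (Psi k Q) (Set.Icc y1 y2) := by
    apply strictAntiOn_of_deriv_neg (convex_Icc y1 y2)
    · exact fun z hz => (hd z hz).continuousAt.continuousWithinAt
    · intro z hz
      rw [interior_Icc] at hz
      rw [(hd z ⟨hz.1.le, hz.2.le⟩).deriv]
      exact dPsi_neg k hk hQ0 (by linarith [hz.1]) (by linarith [hz.2])
  exact hanti (Set.left_mem_Icc.mpr h12.le) (Set.right_mem_Icc.mpr h12.le) h12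

lemma Psi_mono (k : ℕ) (hk : 2 ≤ k) {Q y1 y2 : ℝ} (hQ0 : 0 < Q) (hQ1 : Q < 1)
    (hy1 : 1 - Q ≤ y1) (h12 : y1 < y2) (hy2 : y2 < 1) (hq2 : qf k Q y2 < 1) :
    Psi k Q y1 < Psi k Q y2 := by
  have hy10 : 0 < y1 := by linarith
  have hlt1 : ∀ z ∈ Set.Icc y1 y2, qf k Q z < 1 := fun z hz =>
    lt_of_le_of_lt (qf_le_of_le k hk hQ0 (by linarith [hz.1]) hy2 hz.2) hq2
  have hd : ∀ z ∈ Set.Icc y1 y2, HasDerivAt (Psi k Q) (dPsi k Q z) z := fun z hz =>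
    hasDerivAt_Psi k hk hQ0 (by linarith [hz.1]) (by linarith [hz.2]) (ne_of_lt (hlt1 z hz))
  have hmono : StrictMonoOn (Psi k Q) (Set.Icc y1 y2) := by
    apply strictMonoOn_of_deriv_pos (convex_Icc y1 y2)
    · exact fun z hz => (hd z hz).continuousAt.continuousWithinAt
    · intro z hz
      rw [interior_Icc] at hz
      rw [(hd z ⟨hz.1.le, hz.2.le⟩).deriv]
      exact dPsi_pos k hk hQ0 (by linarith [hz.1]) (by linarith [hz.2]) (by linarith [hz.1])
        (hlt1 z ⟨hz.1.le, hz.2.le⟩)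
  exact hmono (Set.left_mem_Icc.mpr h12.le) (Set.right_mem_Icc.mpr h12.le) h12

lemma Psi_zero (k : ℕ) {Q : ℝ} (hQ0 : 0 < Q) (hQ1 : Q < 1) : Psi k Q (1 - Q) = 0 := by
  have hQ' : (0:ℝ) < 1 - Q := by linarith
  rw [Psi, qf_oneSubQ k hQ0]
  have e1 : (1:ℝ) - (1 - (1 - Q) ^ k) = (1 - Q) ^ k := by ring
  have e2 : Q * (1 - Q) ^ k / (1 - (1 - Q)) = (1 - Q) ^ k := by
    rw [show (1:ℝ) - (1 - Q) = Q by ring]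
    field_simp
  have e3 : (1 - (1 - Q)) / (1 - Q) = Q / (1 - Q) := by rw [show (1:ℝ) - (1 - Q) = Q by ring]
  rw [e1, e2, e3, Real.logb_pow, Real.logb_div (ne_of_gt hQ0) (ne_of_gt hQ'), binH]
  ring

lemma qstar_gt (k : ℕ) (hk : 2 ≤ k) {Q : ℝ} (hQ0 : 0 < Q) (hQ1 : Q < 1) :
    Q < 1 - (1 - Q) ^ k := by
  have := pow_lt_self_of_lt_one₀ (by linarith : (0:ℝ) < 1 - Q) (by linarith) (by omega : 1 < k)
  linarith

lemma qstar_lt_kQ (k : ℕ) (hk : 2 ≤ k) {Q : ℝ} (hQ0 : 0 < Q) (hQ1 : Q < 1) :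
    1 - (1 - Q) ^ k < (k : ℝ) * Q := by
  have hB := one_add_mul_le_pow (by linarith : (-2:ℝ) ≤ -Q) (k - 1)
  have hcast : ((k - 1 : ℕ) : ℝ) = (k : ℝ) - 1 := by
    have : 1 ≤ k := by omega
    push_cast [this]; ring
  rw [hcast, show (1:ℝ) + -Q = 1 - Q by ring] at hB
  have hpow : (1 - Q) ^ k = (1 - Q) ^ (k - 1) * (1 - Q) := by
    rw [← pow_succ]; congr 1; omega
  have hmul := mul_le_mul_of_nonneg_right hB (by linarith : (0:ℝ) ≤ 1 - Q)
  rw [← hpow] at hmul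
  have hk1 : (0:ℝ) < (k:ℝ) - 1 := by
    have : (2:ℝ) ≤ (k:ℝ) := by exact_mod_cast hk
    linarith
  nlinarith [mul_pos hk1 (mul_pos hQ0 hQ0)]

/-- for `k ≥ 2` and `0 < Q < 1`, the function `q ↦ A(k,Q,q)` is strictly
decreasing on `(Q, 1−(1−Q)^k]`, strictly increasing on `[1−(1−Q)^k, min{1,kQ})`, and
vanishes at `q = 1−(1−Q)^k`. -/
theorem stmt_11 (k : ℕ) (hk : 2 ≤ k) (Q : ℝ) (hQ0 : 0 < Q) (hQ1 : Q < 1) :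
    StrictAntiOn (fun q => funA k Q q) (Set.Ioc Q (1 - (1 - Q) ^ k)) ∧
    StrictMonoOn (fun q => funA k Q q) (Set.Ico (1 - (1 - Q) ^ k) (min 1 ((k : ℝ) * Q))) ∧
    funA k Q (1 - (1 - Q) ^ k) = 0 := by
  have hQ' : (0:ℝ) < 1 - Q := by linarith
  have hstar := qstar_lt_kQ k hk hQ0 hQ1
  have hstar2 := qstar_gt k hk hQ0 hQ1
  refine ⟨?_, ?_, ?_⟩
  · -- strictly decreasing part
    intro q1 h1 q2 h2 hlt
    obtain ⟨y1, hy1, he1⟩ := exists_root k hk hQ0 hQ1 h1.1 (lt_of_le_of_lt h1.2 hstar)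
    obtain ⟨y2, hy2, he2⟩ := exists_root k hk hQ0 hQ1 h2.1 (lt_of_le_of_lt h2.2 hstar)
    have hm1 : y1 ∈ Set.Ico (0:ℝ) 1 := ⟨hy1.1.le, hy1.2⟩
    have hm2 : y2 ∈ Set.Ico (0:ℝ) 1 := ⟨hy2.1.le, hy2.2⟩
    have hmQ : (1 - Q) ∈ Set.Ico (0:ℝ) 1 := ⟨by linarith, by linarith⟩
    have hy12 : y1 < y2 :=
      ((qf_strictMonoOn k hk hQ0).lt_iff_lt hm1 hm2).mp (by rw [he1, he2]; exact hlt)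
    have hy2Q : y2 ≤ 1 - Q := by
      apply ((qf_strictMonoOn k hk hQ0).le_iff_le hm2 hmQ).mp
      rw [he2, qf_oneSubQ k hQ0]; exact h2.2
    simp only []
    rw [← he1, ← he2, funA_qf k hk hQ0 hy1, funA_qf k hk hQ0 hy2]
    exact Psi_anti k hk hQ0 hQ1 hy1.1 hy12 hy2Q
  · -- strictly increasing part
    intro q1 h1 q2 h2 hlt
    have h1m := lt_min_iff.mp h1.2
    have h2m := lt_min_iff.mp h2.2
    obtain ⟨y1, hy1, he1⟩ := exists_root k hk hQ0 hQ1 (lt_of_lt_of_le hstar2 h1.1) h1m.2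
    obtain ⟨y2, hy2, he2⟩ := exists_root k hk hQ0 hQ1 (lt_of_lt_of_le hstar2 h2.1) h2m.2
    have hm1 : y1 ∈ Set.Ico (0:ℝ) 1 := ⟨hy1.1.le, hy1.2⟩
    have hm2 : y2 ∈ Set.Ico (0:ℝ) 1 := ⟨hy2.1.le, hy2.2⟩
    have hmQ : (1 - Q) ∈ Set.Ico (0:ℝ) 1 := ⟨by linarith, by linarith⟩
    have hy12 : y1 < y2 :=
      ((qf_strictMonoOn k hk hQ0).lt_iff_lt hm1 hm2).mp (by rw [he1, he2]; exact hlt)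
    have hy1Q : 1 - Q ≤ y1 := by
      apply ((qf_strictMonoOn k hk hQ0).le_iff_le hmQ hm1).mp
      rw [he1, qf_oneSubQ k hQ0]; exact h1.1
    simp only []
    rw [← he1, ← he2, funA_qf k hk hQ0 hy1, funA_qf k hk hQ0 hy2]
    exact Psi_mono k hk hQ0 hQ1 hy1Q hy12 hy2.2 (by rw [he2]; exact h2m.1)
  · rw [show (1:ℝ) - (1 - Q) ^ k = qf k Q (1 - Q) from (qf_oneSubQ k hQ0).symm,
      funA_qf k hk hQ0 ⟨by linarith, by linarith⟩]
    exact Psi_zero k hQ0 hQ1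
end

section
/- Let k ≥ 2 be an integer and 0 < q < 1. As a function of Q, A(k,Q,q) is strictly decreasing on the interval (q/k, 1−(1−q)^{1/k}], strictly increasing on the interval [1−(1−q)^{1/k}, q), and equals 0 at the point Q = 1−(1−q)^{1/k}. -/
set_option maxHeartbeats 1000000

namespace Stmt12

noncomputable def Sf (k : ℕ) (y : ℝ) : ℝ := ∑ i ∈ Finset.range k, y ^ i

lemma Sf_geom (k : ℕ) (y : ℝ) : (1 - y) * Sf k y = 1 - y ^ k := by
  have := geom_sum_mul y k
  unfold Sf
  nlinarith [this]

lemma Sf_zero {k : ℕ} (hk : 2 ≤ k) : Sf k 0 = 1 := by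
  have h := Sf_geom k 0
  have : (0:ℝ) ^ k = 0 := zero_pow (by omega)
  simpa [this] using h

lemma Sf_one (k : ℕ) : Sf k 1 = k := by
  simp [Sf]

lemma Sf_mono {k : ℕ} (hk : 2 ≤ k) {a b : ℝ} (ha : 0 ≤ a) (hab : a < b) :
    Sf k a < Sf k b := by
  unfold Sf
  refine Finset.sum_lt_sum (fun i _ => pow_le_pow_left₀ ha hab.le i) ⟨1, ?_, ?_⟩
  · simp; omega
  · simpa using hab

lemma Sf_le_imp {k : ℕ} (hk : 2 ≤ k) {a b : ℝ} (hb : 0 ≤ b)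
    (h : Sf k a ≤ Sf k b) (ha : 0 ≤ a) : a ≤ b := by
  by_contra hc
  push_neg at hc
  exact absurd h (not_le.mpr (Sf_mono hk hb hc))

lemma Sf_le_of_le {k : ℕ} (hk : 2 ≤ k) {a b : ℝ} (ha : 0 ≤ a) (hab : a ≤ b) :
    Sf k a ≤ Sf k b := by
  rcases eq_or_lt_of_le hab with rfl | h
  · exact le_refl _
  · exact (Sf_mono hk ha h).le

lemma bern {a : ℝ} (ha : 0 < a) (ha1 : a < 1) : ∀ n : ℕ, 2 ≤ n → 1 - n * a < (1 - a) ^ n := by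
  intro n hn
  induction n with
  | zero => omega
  | succ m ih =>
    rcases Nat.lt_or_ge m 2 with h | h
    · have hm : m = 1 := by omega
      subst hm
      push_cast
      nlinarith
    · have hih := ih h
      have h1a : (0:ℝ) < 1 - a := by linarith
      rcases le_or_gt (1 - (m:ℝ) * a) 0 with h0 | h0
      · have : (0:ℝ) < (1 - a) ^ (m + 1) := pow_pos h1a _
        push_cast
        nlinarith
      · have : (1 - (m:ℝ) * a) * (1 - a) < (1 - a) ^ m * (1 - a) :=
          mul_lt_mul_of_pos_right hih h1a
        rw [← pow_succ] at this
        push_cast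
        nlinarith [mul_nonneg (mul_nonneg (Nat.cast_nonneg m : (0:ℝ) ≤ m) ha.le) ha.le]

theorem rootY_eq {k : ℕ} (hk : 2 ≤ k) {q Q : ℝ} (hq0 : 0 < q) (hq1 : q < 1)
    (hQ : Q ∈ Set.Ioo (q / (k:ℝ)) q) {z : ℝ} (hz : z ∈ Set.Ioo (0:ℝ) 1)
    (hSz : Sf k z = q / Q) : rootY k Q q = z := by
  have hQ0 : 0 < Q := lt_trans (div_pos hq0 (by positivity)) hQ.1
  have hset : {y : ℝ | y ∈ Set.Ioo (0 : ℝ) 1 ∧ q = Q * (1 - y ^ k) / (1 - y)} = {z} := by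
    ext w
    simp only [Set.mem_setOf_eq, Set.mem_singleton_iff]
    constructor
    · rintro ⟨hw, heq⟩
      have hw1 : (0:ℝ) < 1 - w := by linarith [hw.2]
      have hgw := Sf_geom k w
      have hqw : q * (1 - w) = Q * (1 - w ^ k) := by
        field_simp at heq
        linarith [heq]
      have hSw : Sf k w = q / Q := by
        rw [← hgw] at hqw
        have hq' : q = Q * Sf k w := by
          have h' : (1 - w) * q = (1 - w) * (Q * Sf k w) := by ring_nf; ring_nf at hqw; linarith
          exact mul_left_cancel₀ (ne_of_gt hw1) h'
        rw [hq']
        field_simp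
      have := hSw.trans hSz.symm
      have h1 : w ≤ z := Sf_le_imp hk hz.1.le (le_of_eq this) hw.1.le
      have h2 : z ≤ w := Sf_le_imp hk hw.1.le (ge_of_eq this) hz.1.le
      linarith
    · rintro rfl
      refine ⟨hz, ?_⟩
      have hz1 : (0:ℝ) < 1 - w := by linarith [hz.2]
      have hgw := Sf_geom k w
      rw [← hgw, hSz]
      field_simp
  rw [rootY, hset]
  exact csSup_singleton z

theorem rootY_spec {k : ℕ} (hk : 2 ≤ k) {q Q : ℝ} (hq0 : 0 < q) (hq1 : q < 1)
    (hQ : Q ∈ Set.Ioo (q / (k:ℝ)) q) :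
    rootY k Q q ∈ Set.Ioo (0:ℝ) 1 ∧ Sf k (rootY k Q q) = q / Q := by
  have hQ0 : 0 < Q := lt_trans (div_pos hq0 (by positivity)) hQ.1
  have hK0 : (0:ℝ) < k := by positivity
  have h1 : 1 < q / Q := (one_lt_div hQ0).mpr hQ.2
  have h2 : q / Q < k := (div_lt_iff₀ hQ0).mpr (by
    have := hQ.1
    rw [div_lt_iff₀ hK0] at this
    linarith)
  have hcont : ContinuousOn (Sf k) (Set.Icc (0:ℝ) 1) := by
    apply Continuous.continuousOn
    unfold Sf
    exact continuous_finset_sum _ (fun i _ => continuous_pow i)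
  have hIV := intermediate_value_Ioo (zero_le_one) hcont
  have hmem : q / Q ∈ Set.Ioo (Sf k 0) (Sf k 1) := by
    rw [Sf_zero hk, Sf_one]
    exact ⟨h1, h2⟩
  obtain ⟨z, hz, hSz⟩ := hIV hmem
  rw [rootY_eq hk hq0 hq1 hQ hz hSz]
  exact ⟨hz, hSz⟩

noncomputable def Qf (k : ℕ) (q y : ℝ) : ℝ := q * (1 - y) / (1 - y ^ k)

noncomputable def Qf' (k : ℕ) (q y : ℝ) : ℝ :=
  (q * (1 - y) * ((k:ℝ) * y ^ (k - 1)) - q * (1 - y ^ k)) / (1 - y ^ k) ^ 2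

noncomputable def Ffun (k : ℕ) (q : ℝ) (y : ℝ) : ℝ :=
  q * Real.log (Qf k q y) + q * (k:ℝ) * Real.log y - q * Real.log (1 - y)
    + (k:ℝ) * Qf k q y * (Real.log (1 - y) - Real.log y)
    + (k:ℝ) * (-(Qf k q y) * Real.log (Qf k q y)
        - (1 - Qf k q y) * Real.log (1 - Qf k q y))

lemma basic_facts {k : ℕ} (hk : 2 ≤ k) {q y : ℝ} (hq0 : 0 < q) (hq1 : q < 1)
    (hy : y ∈ Set.Ioo (0:ℝ) 1) :
    0 < 1 - y ^ k ∧ 0 < Qf k q y ∧ Qf k q y < 1 := by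
  have hy0 := hy.1
  have hy1 := hy.2
  have hD : 0 < 1 - y ^ k := by
    have : y ^ k < 1 := pow_lt_one₀ hy0.le hy1 (by omega)
    linarith
  have hy1' : (0:ℝ) < 1 - y := by linarith
  have hQ0 : 0 < Qf k q y := div_pos (mul_pos hq0 hy1') hD
  have hQ1 : Qf k q y < 1 := by
    unfold Qf
    rw [div_lt_one hD]
    have hyk : y ^ k ≤ y := by
      calc y ^ k ≤ y ^ 1 := pow_le_pow_of_le_one hy0.le hy1.le (by omega)
        _ = y := pow_one y
    nlinarith
  exact ⟨hD, hQ0, hQ1⟩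

lemma hasDerivAt_Qf {k : ℕ} (hk : 2 ≤ k) {q y : ℝ} (hq0 : 0 < q) (hq1 : q < 1)
    (hy : y ∈ Set.Ioo (0:ℝ) 1) : HasDerivAt (Qf k q) (Qf' k q y) y := by
  obtain ⟨hD, hQ0, hQ1⟩ := basic_facts hk hq0 hq1 hy
  have h1 : HasDerivAt (fun x : ℝ => q * (1 - x)) (q * (0 - 1)) y :=
    (((hasDerivAt_const y (1:ℝ)).sub (hasDerivAt_id y))).const_mul q
  have h2 : HasDerivAt (fun x : ℝ => 1 - x ^ k) (0 - ((k:ℝ) * y ^ (k - 1))) y :=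
    (hasDerivAt_const y (1:ℝ)).sub (hasDerivAt_pow k y)
  have := h1.div h2 (ne_of_gt hD)
  refine this.congr_deriv ?_
  unfold Qf'
  field_simp
  ring

lemma hasDerivAt_F {k : ℕ} (hk : 2 ≤ k) {q y : ℝ} (hq0 : 0 < q) (hq1 : q < 1)
    (hy : y ∈ Set.Ioo (0:ℝ) 1) :
    HasDerivAt (Ffun k q)
      ((k:ℝ) * Qf' k q y *
        (Real.log (1 - y) - Real.log y + Real.log (1 - Qf k q y) - Real.log (Qf k q y))) y := by
  obtain ⟨hD, hQ0, hQ1⟩ := basic_facts hk hq0 hq1 hy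
  have hy0 := hy.1
  have hy1 := hy.2
  have hy1' : (0:ℝ) < 1 - y := by linarith
  have hQf := hasDerivAt_Qf hk hq0 hq1 hy
  have hlogQ : HasDerivAt (fun x => Real.log (Qf k q x)) (Qf' k q y / Qf k q y) y :=
    hQf.log (ne_of_gt hQ0)
  have hlogy : HasDerivAt Real.log y⁻¹ y := Real.hasDerivAt_log (ne_of_gt hy0)
  have h1my : HasDerivAt (fun x : ℝ => 1 - x) (0 - 1) y :=
    (hasDerivAt_const y (1:ℝ)).sub (hasDerivAt_id y)
  have hlog1my : HasDerivAt (fun x => Real.log (1 - x)) ((0 - 1) / (1 - y)) y :=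
    h1my.log (ne_of_gt hy1')
  have h1mQ : HasDerivAt (fun x => 1 - Qf k q x) (0 - Qf' k q y) y :=
    (hasDerivAt_const y (1:ℝ)).sub hQf
  have hlog1mQ : HasDerivAt (fun x => Real.log (1 - Qf k q x))
      ((0 - Qf' k q y) / (1 - Qf k q y)) y := h1mQ.log (by linarith)
  have T1 : HasDerivAt (fun x => q * Real.log (Qf k q x)) (q * (Qf' k q y / Qf k q y)) y :=
    hlogQ.const_mul q
  have T2 : HasDerivAt (fun x => q * (k:ℝ) * Real.log x) (q * (k:ℝ) * y⁻¹) y :=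
    hlogy.const_mul (q * (k:ℝ))
  have T3 : HasDerivAt (fun x => q * Real.log (1 - x)) (q * ((0 - 1) / (1 - y))) y :=
    hlog1my.const_mul q
  have T4 : HasDerivAt (fun x => (k:ℝ) * Qf k q x * (Real.log (1 - x) - Real.log x))
      ((k:ℝ) * Qf' k q y * (Real.log (1 - y) - Real.log y)
        + (k:ℝ) * Qf k q y * ((0 - 1) / (1 - y) - y⁻¹)) y := by
    exact ((hQf.const_mul (k:ℝ)).mul (hlog1my.sub hlogy))
  have T5 : HasDerivAt (fun x => (k:ℝ) * (-(Qf k q x) * Real.log (Qf k q x)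
      - (1 - Qf k q x) * Real.log (1 - Qf k q x)))
      ((k:ℝ) * ((-(Qf' k q y) * Real.log (Qf k q y) + -(Qf k q y) * (Qf' k q y / Qf k q y))
        - ((0 - Qf' k q y) * Real.log (1 - Qf k q y)
            + (1 - Qf k q y) * ((0 - Qf' k q y) / (1 - Qf k q y))))) y := by
    exact ((hQf.neg.mul hlogQ).sub (h1mQ.mul hlog1mQ)).const_mul (k:ℝ)
  have hall := (((T1.add T2).sub T3).add T4).add T5
  have hz : q * (Qf' k q y / Qf k q y) + q * (k:ℝ) / y + q / (1 - y)
      - (k:ℝ) * Qf k q y / (1 - y) - (k:ℝ) * Qf k q y / y = 0 := by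
    have hqne : q ≠ 0 := ne_of_gt hq0
    have hyne : y ≠ 0 := ne_of_gt hy0
    have h1yne : (1:ℝ) - y ≠ 0 := ne_of_gt hy1'
    have hDne : (1:ℝ) - y ^ k ≠ 0 := ne_of_gt hD
    obtain ⟨m, rfl⟩ : ∃ m, k = m + 1 := ⟨k - 1, by omega⟩
    unfold Qf Qf'
    simp only [Nat.add_sub_cancel]
    field_simp
    ring
  have hQne : Qf k q y ≠ 0 := ne_of_gt hQ0
  have h1Qne : 1 - Qf k q y ≠ 0 := ne_of_gt (by linarith)
  have hyne : y ≠ 0 := ne_of_gt hy0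
  have h1yne : (1:ℝ) - y ≠ 0 := ne_of_gt hy1'
  have hframe : ∀ P P' a b c d v : ℝ, P ≠ 0 → 1 - P ≠ 0 → v ≠ 0 → (1:ℝ) - v ≠ 0 →
      (q * (P' / P) + q * (k:ℝ) / v + q / (1 - v) - (k:ℝ) * P / (1 - v) - (k:ℝ) * P / v = 0) →
      (k:ℝ) * P' * (b - a + d - c) =
        q * (P' / P) + q * (k:ℝ) * v⁻¹ - q * ((0 - 1) / (1 - v))
          + ((k:ℝ) * P' * (b - a) + (k:ℝ) * P * ((0 - 1) / (1 - v) - v⁻¹))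
          + (k:ℝ) * ((-P' * c + -P * (P' / P)) - ((0 - P') * d + (1 - P) * ((0 - P') / (1 - P)))) := by
    intro P P' a b c d v hP h1P hv h1v hzz
    have c1 : -P * (P' / P) = -P' := by field_simp
    have c2 : (1 - P) * ((0 - P') / (1 - P)) = 0 - P' := by
      rw [mul_div_assoc']
      rw [mul_div_cancel_left₀ _ h1P]
    rw [c1, c2]
    linear_combination -hzz
  refine hall.congr_deriv ?_
  exact (hframe _ _ _ _ _ _ _ hQne h1Qne hyne h1yne hz).symm

noncomputable def Bfun (k : ℕ) (q y : ℝ) : ℝ :=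
  (1 - q) * Real.logb 2 (1 - q)
    + q * Real.logb 2 (Qf k q y * y ^ k / (1 - y))
    + (k : ℝ) * Qf k q y * Real.logb 2 ((1 - y) / y)
    + (k : ℝ) * binH (Qf k q y)

noncomputable def Gfun (k : ℕ) (q y : ℝ) : ℝ :=
  (1 - q) * Real.logb 2 (1 - q) + (Real.log 2)⁻¹ * Ffun k q y

lemma Bfun_eq_Gfun {k : ℕ} (hk : 2 ≤ k) {q y : ℝ} (hq0 : 0 < q) (hq1 : q < 1)
    (hy : y ∈ Set.Ioo (0:ℝ) 1) : Bfun k q y = Gfun k q y := by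
  obtain ⟨hD, hQ0, hQ1⟩ := basic_facts hk hq0 hq1 hy
  have hy0 := hy.1
  have hy1 := hy.2
  have hy1' : (0:ℝ) < 1 - y := by linarith
  have hQne : Qf k q y ≠ 0 := ne_of_gt hQ0
  have h1Qne : (1:ℝ) - Qf k q y ≠ 0 := ne_of_gt (by linarith)
  have hyk : y ^ k ≠ 0 := pow_ne_zero _ (ne_of_gt hy0)
  have hl2 : Real.log 2 ≠ 0 := ne_of_gt (Real.log_pos one_lt_two)
  unfold Bfun Gfun Ffun binH
  rw [Real.logb_div (mul_ne_zero hQne hyk) (ne_of_gt hy1'),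
      Real.logb_mul hQne hyk, Real.logb_pow,
      Real.logb_div (ne_of_gt hy1') (ne_of_gt hy0)]
  simp only [Real.logb]
  field_simp
  ring

lemma Qf'_neg {k : ℕ} (hk : 2 ≤ k) {q y : ℝ} (hq0 : 0 < q) (hq1 : q < 1)
    (hy : y ∈ Set.Ioo (0:ℝ) 1) : Qf' k q y < 0 := by
  obtain ⟨hD, hQ0, hQ1⟩ := basic_facts hk hq0 hq1 hy
  have hy0 := hy.1
  have hy1 := hy.2
  have hy1' : (0:ℝ) < 1 - y := by linarith
  have hsum : (k:ℝ) * y ^ (k - 1) < Sf k y := by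
    have hconst : ∑ _i ∈ Finset.range k, y ^ (k - 1) = (k:ℝ) * y ^ (k - 1) := by
      rw [Finset.sum_const, Finset.card_range, nsmul_eq_mul]
    rw [← hconst]
    unfold Sf
    refine Finset.sum_lt_sum (fun i hi => pow_le_pow_of_le_one hy0.le hy1.le ?_) ⟨0, ?_, ?_⟩
    · have := Finset.mem_range.mp hi; omega
    · simp; omega
    · simpa using pow_lt_one₀ hy0.le hy1 (show k - 1 ≠ 0 by omega)
  have hgeom := Sf_geom k y
  have hnum : q * (1 - y) * ((k:ℝ) * y ^ (k - 1)) - q * (1 - y ^ k) < 0 := by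
    nlinarith [mul_lt_mul_of_pos_left hsum (mul_pos hq0 hy1'), hgeom]
  exact div_neg_of_neg_of_pos hnum (pow_pos hD 2)

end Stmt12

open Stmt12 in
/-- for `k ≥ 2` and `0 < q < 1`, the function `Q ↦ A(k,Q,q)` is strictly
decreasing on `(q/k, 1−(1−q)^{1/k}]`, strictly increasing on `[1−(1−q)^{1/k}, q)`, and
vanishes at `Q = 1−(1−q)^{1/k}`. -/
theorem stmt_12 (k : ℕ) (hk : 2 ≤ k) (q : ℝ) (hq0 : 0 < q) (hq1 : q < 1) :
    StrictAntiOn (fun Q => funA k Q q)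
      (Set.Ioc (q / (k : ℝ)) (1 - (1 - q) ^ ((1 : ℝ) / (k : ℝ)))) ∧
    StrictMonoOn (fun Q => funA k Q q)
      (Set.Ico (1 - (1 - q) ^ ((1 : ℝ) / (k : ℝ))) q) ∧
    funA k (1 - (1 - q) ^ ((1 : ℝ) / (k : ℝ))) q = 0 := by
  have hK2 : (2:ℝ) ≤ (k:ℝ) := by exact_mod_cast hk
  have hK0 : (0:ℝ) < (k:ℝ) := by linarith
  have h1q : (0:ℝ) < 1 - q := by linarith
  set ys := (1 - q) ^ ((1 : ℝ) / (k : ℝ)) with hysdef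
  have hys0 : 0 < ys := Real.rpow_pos_of_pos h1q _
  have hys1 : ys < 1 := Real.rpow_lt_one h1q.le (by linarith) (by positivity)
  have h1ys0 : (0:ℝ) < 1 - ys := by linarith
  have hpow : ys ^ k = 1 - q := by
    rw [hysdef, ← Real.rpow_natCast ((1 - q) ^ ((1:ℝ)/(k:ℝ))) k, ← Real.rpow_mul h1q.le,
      one_div_mul_cancel (ne_of_gt hK0), Real.rpow_one]
  have hQs_lt : 1 - ys < q := by
    have h := Real.rpow_lt_rpow_of_exponent_gt h1q (by linarith : 1 - q < 1)
      (show (1:ℝ)/(k:ℝ) < 1 by rw [div_lt_one hK0]; linarith)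
    rw [Real.rpow_one] at h
    rw [hysdef]
    linarith
  have hqk_lt : q / (k:ℝ) < 1 - ys := by
    have hqk1 : q / (k:ℝ) < 1 := by rw [div_lt_one hK0]; linarith
    have hb := bern (a := q / (k:ℝ)) (by positivity) hqk1 k hk
    have hka : (k:ℝ) * (q / (k:ℝ)) = q := by field_simp
    rw [hka] at hb
    have hlt : ys < 1 - q / (k:ℝ) := by
      apply lt_of_pow_lt_pow_left₀ k (by linarith)
      rw [hpow]; exact hb
    linarith
  have hSys : Sf k ys = q / (1 - ys) := by
    have hg := Sf_geom k ys
    rw [hpow] at hg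
    rw [eq_div_iff (ne_of_gt h1ys0)]
    linarith [hg]
  have hQsmem : 1 - ys ∈ Set.Ioo (q/(k:ℝ)) q := ⟨hqk_lt, hQs_lt⟩
  have hroot_s : rootY k (1 - ys) q = ys := rootY_eq hk hq0 hq1 hQsmem ⟨hys0, hys1⟩ hSys
  -- funA equals Gfun of the root
  have key : ∀ Q ∈ Set.Ioo (q/(k:ℝ)) q, rootY k Q q ∈ Set.Ioo (0:ℝ) 1 ∧
      Sf k (rootY k Q q) = q / Q ∧ funA k Q q = Gfun k q (rootY k Q q) := by
    intro Q hQ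
    obtain ⟨hr, hSr⟩ := rootY_spec hk hq0 hq1 hQ
    have hQ0 : 0 < Q := lt_trans (div_pos hq0 hK0) hQ.1
    have h1r : (0:ℝ) < 1 - rootY k Q q := by linarith [hr.2]
    have hQfr : Qf k q (rootY k Q q) = Q := by
      have hg := Sf_geom k (rootY k Q q)
      rw [hSr] at hg
      unfold Qf
      rw [← hg]
      rw [div_eq_iff (by positivity : (1 - rootY k Q q) * (q / Q) ≠ 0)]
      field_simp
    have heq : funA k Q q = Bfun k q (rootY k Q q) := by
      unfold funA Bfun
      rw [hQfr]
    exact ⟨hr, hSr, heq.trans (Bfun_eq_Gfun hk hq0 hq1 hr)⟩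
  -- derivative of Gfun
  have hGd : ∀ y ∈ Set.Ioo (0:ℝ) 1, HasDerivAt (Gfun k q)
      ((Real.log 2)⁻¹ * ((k:ℝ) * Qf' k q y *
        (Real.log (1 - y) - Real.log y + Real.log (1 - Qf k q y) - Real.log (Qf k q y)))) y := by
    intro y hy
    have h := (hasDerivAt_const y ((1 - q) * Real.logb 2 (1 - q))).add
      ((hasDerivAt_F hk hq0 hq1 hy).const_mul ((Real.log 2)⁻¹))
    rw [zero_add] at h
    exact h
  have hinv2 : (0:ℝ) < (Real.log 2)⁻¹ := inv_pos.mpr (Real.log_pos one_lt_two)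
  -- Gfun strictly decreasing on (0, ys]
  have hanti : StrictAntiOn (Gfun k q) (Set.Ioc 0 ys) := by
    have hsub : Set.Ioc (0:ℝ) ys ⊆ Set.Ioo 0 1 := fun x hx => ⟨hx.1, lt_of_le_of_lt hx.2 hys1⟩
    apply strictAntiOn_of_deriv_neg (convex_Ioc _ _)
    · exact fun x hx => ((hGd x (hsub hx)).continuousAt).continuousWithinAt
    · intro x hx
      rw [interior_Ioc] at hx
      have hx' : x ∈ Set.Ioo (0:ℝ) 1 := ⟨hx.1, hx.2.trans hys1⟩
      obtain ⟨hD, hQ0, hQ1⟩ := basic_facts hk hq0 hq1 hx'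
      rw [(hGd x hx').deriv]
      have hQfn := Qf'_neg hk hq0 hq1 hx'
      have hx1' : (0:ℝ) < 1 - x := by linarith [hx'.2]
      have hQlt : Qf k q x < 1 - x := by
        unfold Qf
        rw [div_lt_iff₀ hD]
        have hxk : x ^ k < 1 - q := by
          rw [← hpow]; exact pow_lt_pow_left₀ hx.2 hx.1.le (by omega)
        nlinarith
      have hL : 0 < Real.log (1 - x) - Real.log x + Real.log (1 - Qf k q x) - Real.log (Qf k q x) := by
        have h1 : Real.log (x * Qf k q x) < Real.log ((1 - x) * (1 - Qf k q x)) :=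
          Real.log_lt_log (mul_pos hx'.1 hQ0) (by nlinarith)
        rw [Real.log_mul (ne_of_gt hx'.1) (ne_of_gt hQ0),
            Real.log_mul (ne_of_gt hx1') (by linarith : (1:ℝ) - Qf k q x ≠ 0)] at h1
        linarith
      exact mul_neg_of_pos_of_neg hinv2
        (mul_neg_of_neg_of_pos (mul_neg_of_pos_of_neg hK0 hQfn) hL)
  -- Gfun strictly increasing on [ys, 1)
  have hmono : StrictMonoOn (Gfun k q) (Set.Ico ys 1) := by
    have hsub : Set.Ico ys 1 ⊆ Set.Ioo (0:ℝ) 1 := fun x hx => ⟨lt_of_lt_of_le hys0 hx.1, hx.2⟩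
    apply strictMonoOn_of_deriv_pos (convex_Ico _ _)
    · exact fun x hx => ((hGd x (hsub hx)).continuousAt).continuousWithinAt
    · intro x hx
      rw [interior_Ico] at hx
      have hx' : x ∈ Set.Ioo (0:ℝ) 1 := ⟨lt_trans hys0 hx.1, hx.2⟩
      obtain ⟨hD, hQ0, hQ1⟩ := basic_facts hk hq0 hq1 hx'
      rw [(hGd x hx').deriv]
      have hQfn := Qf'_neg hk hq0 hq1 hx'
      have hx1' : (0:ℝ) < 1 - x := by linarith [hx'.2]
      have hQgt : 1 - x < Qf k q x := by
        unfold Qf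
        rw [lt_div_iff₀ hD]
        have hxk : 1 - q < x ^ k := by
          rw [← hpow]; exact pow_lt_pow_left₀ hx.1 hys0.le (by omega)
        nlinarith
      have hL : Real.log (1 - x) - Real.log x + Real.log (1 - Qf k q x) - Real.log (Qf k q x) < 0 := by
        have h1 : Real.log ((1 - x) * (1 - Qf k q x)) < Real.log (x * Qf k q x) :=
          Real.log_lt_log (mul_pos hx1' (by linarith)) (by nlinarith)
        rw [Real.log_mul (ne_of_gt hx'.1) (ne_of_gt hQ0),
            Real.log_mul (ne_of_gt hx1') (by linarith : (1:ℝ) - Qf k q x ≠ 0)] at h1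
        linarith
      exact mul_pos hinv2
        (mul_pos_of_neg_of_neg (mul_neg_of_pos_of_neg hK0 hQfn) hL)
  refine ⟨?_, ?_, ?_⟩
  · -- strictly decreasing on (q/k, 1-ys]
    intro Q1 hQ1 Q2 hQ2 h12
    have hQ1m : Q1 ∈ Set.Ioo (q/(k:ℝ)) q := ⟨hQ1.1, lt_of_le_of_lt hQ1.2 hQs_lt⟩
    have hQ2m : Q2 ∈ Set.Ioo (q/(k:ℝ)) q := ⟨hQ2.1, lt_of_le_of_lt hQ2.2 hQs_lt⟩
    obtain ⟨hr1, hS1, hF1⟩ := key Q1 hQ1m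
    obtain ⟨hr2, hS2, hF2⟩ := key Q2 hQ2m
    have hQ10 : 0 < Q1 := lt_trans (div_pos hq0 hK0) hQ1m.1
    have hQ20 : 0 < Q2 := lt_trans (div_pos hq0 hK0) hQ2m.1
    have hr21 : rootY k Q2 q < rootY k Q1 q := by
      have hdiv : q / Q2 < q / Q1 := by
        rw [div_lt_div_iff₀ hQ20 hQ10]; nlinarith
      apply lt_of_not_ge
      intro hle
      have := Sf_le_of_le hk hr1.1.le hle
      rw [hS1, hS2] at this
      linarith
    have hge1 : ys ≤ rootY k Q1 q := by
      apply Sf_le_imp hk hr1.1.le _ hys0.le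
      rw [hS1, hSys]
      rw [div_le_div_iff₀ h1ys0 hQ10]; nlinarith [hQ1.2]
    have hge2 : ys ≤ rootY k Q2 q := by
      apply Sf_le_imp hk hr2.1.le _ hys0.le
      rw [hS2, hSys]
      rw [div_le_div_iff₀ h1ys0 hQ20]; nlinarith [hQ2.2]
    show funA k Q2 q < funA k Q1 q
    rw [hF1, hF2]
    exact hmono ⟨hge2, hr2.2⟩ ⟨hge1, hr1.2⟩ hr21
  · -- strictly increasing on [1-ys, q)
    intro Q1 hQ1 Q2 hQ2 h12
    have hQ1m : Q1 ∈ Set.Ioo (q/(k:ℝ)) q := ⟨lt_of_lt_of_le hqk_lt hQ1.1, hQ1.2⟩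
    have hQ2m : Q2 ∈ Set.Ioo (q/(k:ℝ)) q := ⟨lt_of_lt_of_le hqk_lt hQ2.1, hQ2.2⟩
    obtain ⟨hr1, hS1, hF1⟩ := key Q1 hQ1m
    obtain ⟨hr2, hS2, hF2⟩ := key Q2 hQ2m
    have hQ10 : 0 < Q1 := lt_trans (div_pos hq0 hK0) hQ1m.1
    have hQ20 : 0 < Q2 := lt_trans (div_pos hq0 hK0) hQ2m.1
    have hr21 : rootY k Q2 q < rootY k Q1 q := by
      have hdiv : q / Q2 < q / Q1 := by
        rw [div_lt_div_iff₀ hQ20 hQ10]; nlinarith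
      apply lt_of_not_ge
      intro hle
      have := Sf_le_of_le hk hr1.1.le hle
      rw [hS1, hS2] at this
      linarith
    have hle1 : rootY k Q1 q ≤ ys := by
      apply Sf_le_imp hk hys0.le _ hr1.1.le
      rw [hS1, hSys]
      rw [div_le_div_iff₀ hQ10 h1ys0]; nlinarith [hQ1.1]
    have hle2 : rootY k Q2 q ≤ ys := by
      apply Sf_le_imp hk hys0.le _ hr2.1.le
      rw [hS2, hSys]
      rw [div_le_div_iff₀ hQ20 h1ys0]; nlinarith [hQ2.1]
    show funA k Q1 q < funA k Q2 q
    rw [hF1, hF2]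
    exact hanti ⟨hr2.1, hle2⟩ ⟨hr1.1, hle1⟩ hr21
  · -- value at 1 - ys
    have hcancel : (1 - ys) * ys ^ k / (1 - ys) = ys ^ k :=
      mul_div_cancel_left₀ _ (ne_of_gt h1ys0)
    have hc : Real.logb 2 (1 - q) = (k:ℝ) * Real.logb 2 ys := by
      rw [← hpow, Real.logb_pow]
    unfold funA binH
    rw [hroot_s, hcancel, Real.logb_pow,
      Real.logb_div (ne_of_gt h1ys0) (ne_of_gt hys0), hc]
    have h3 : (1:ℝ) - (1 - ys) = ys := by ring
    rw [h3]
    ring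
end

section
/- Let k ≥ 2 be an integer and 0 < Q < 1. For y ∈ (0,1), set q(y) := Q·(1−y^k)/(1−y) and, on the set of y ∈ (0,1) where q(y) < 1, define T(y) := (1−q(y))·log₂(1−q(y)) + q(y)·log₂[Q y^k/(1−y)] + kQ·log₂[(1−y)/y] + k·h(Q). Then T is differentiable there with T′(y) = q′(y)·log₂[ Q y^k / (1 − Q − y + Q y^k) ]. Consequently T is strictly decreasing for y ∈ (0, 1−Q) and strictly increasing for y ∈ (1−Q, 1) (within the domain), with minimum value 0 at y = 1−Q. -/
open Real Finset

/-- for `k ≥ 2`, `0 < Q < 1`, with `q(y) = Q(1−y^k)/(1−y)` and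
`T(y) = (1−q(y))log₂(1−q(y)) + q(y)log₂[Q y^k/(1−y)] + kQ log₂[(1−y)/y] + k·h(Q)`
on the set `D = {y ∈ (0,1) : q(y) < 1}`: `T` is differentiable on `D` with
`T′(y) = q′(y)·log₂[Q y^k/(1−Q−y+Q y^k)]`; consequently `T` is strictly decreasing on
`(0, 1−Q)` and strictly increasing on `(1−Q, 1)` (within `D`), with minimum value `0`
at `y = 1−Q`. -/
theorem stmt_13 (k : ℕ) (hk : 2 ≤ k) (Q : ℝ) (hQ0 : 0 < Q) (hQ1 : Q < 1)
    (qf Tf : ℝ → ℝ)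
    (hqf : ∀ y, qf y = Q * (1 - y ^ k) / (1 - y))
    (hTf : ∀ y, Tf y =
      (1 - qf y) * Real.logb 2 (1 - qf y)
        + qf y * Real.logb 2 (Q * y ^ k / (1 - y))
        + (k : ℝ) * Q * Real.logb 2 ((1 - y) / y)
        + (k : ℝ) * binH Q) :
    (∀ y ∈ {y : ℝ | y ∈ Set.Ioo (0 : ℝ) 1 ∧ qf y < 1},
        HasDerivAt Tf
          (deriv qf y * Real.logb 2 (Q * y ^ k / (1 - Q - y + Q * y ^ k))) y) ∧
    StrictAntiOn Tf ({y : ℝ | y ∈ Set.Ioo (0 : ℝ) 1 ∧ qf y < 1} ∩ Set.Ioc 0 (1 - Q)) ∧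
    StrictMonoOn Tf ({y : ℝ | y ∈ Set.Ioo (0 : ℝ) 1 ∧ qf y < 1} ∩ Set.Ico (1 - Q) 1) ∧
    Tf (1 - Q) = 0 ∧
    (∀ y ∈ {y : ℝ | y ∈ Set.Ioo (0 : ℝ) 1 ∧ qf y < 1}, 0 ≤ Tf y) := by
  obtain ⟨m, rfl⟩ : ∃ m, k = m + 1 := ⟨k - 1, by omega⟩
  have hm : 1 ≤ m := by omega
  set q' : ℝ → ℝ :=
    fun y => Q * ((1 - y ^ (m + 1)) - ((m : ℝ) + 1) * y ^ m * (1 - y)) / (1 - y) ^ 2 with hq'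
  -- derivative of qf on (0,1)
  have hqderiv : ∀ y : ℝ, 0 < y → y < 1 → HasDerivAt qf (q' y) y := by
    intro y hy0 hy1
    have h1y : (1 : ℝ) - y ≠ 0 := by linarith
    have hnum : HasDerivAt (fun y : ℝ => Q * (1 - y ^ (m + 1)))
        (Q * (-(((m : ℝ) + 1) * y ^ m))) y := by
      have := ((hasDerivAt_pow (m + 1) y).const_sub 1).const_mul Q
      push_cast at this
      simpa using this
    have hden : HasDerivAt (fun y : ℝ => 1 - y) (-1 : ℝ) y := by
      simpa using (hasDerivAt_id y).const_sub 1
    have h := hnum.div hden h1y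
    have heq : qf = fun y : ℝ => Q * (1 - y ^ (m + 1)) / (1 - y) := funext hqf
    rw [heq]
    refine HasDerivAt.congr_deriv h ?_
    rw [hq']
    ring
  -- positivity of q'
  have hq'pos : ∀ y : ℝ, 0 < y → y < 1 → 0 < q' y := by
    intro y hy0 hy1
    have h1y : (0 : ℝ) < 1 - y := by linarith
    have hgs : (1 : ℝ) - y ^ (m + 1) = (∑ i ∈ range (m + 1), y ^ i) * (1 - y) := by
      linear_combination geom_sum_mul y (m + 1)
    have hsum : ((m : ℝ) + 1) * y ^ m < ∑ i ∈ range (m + 1), y ^ i := by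
      have h := Finset.sum_lt_sum (s := range (m + 1)) (f := fun _ => y ^ m)
        (g := fun i => y ^ i)
        (fun i hi => pow_le_pow_of_le_one hy0.le hy1.le (by simp at hi; omega))
        ⟨0, Finset.mem_range.2 (by omega), by
          have : y ^ m < 1 := pow_lt_one₀ hy0.le hy1 (by omega)
          simpa using this⟩
      have h2 : ∑ _i ∈ range (m + 1), y ^ m = ((m : ℝ) + 1) * y ^ m := by
        rw [Finset.sum_const, Finset.card_range, nsmul_eq_mul]; push_cast; ring
      linarith [h, h2.ge, h2.le]
    have hnumpos : 0 < (1 - y ^ (m + 1)) - ((m : ℝ) + 1) * y ^ m * (1 - y) := by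
      rw [hgs]
      have := mul_pos (sub_pos.2 hsum) h1y
      nlinarith
    rw [hq']
    exact div_pos (mul_pos hQ0 hnumpos) (by positivity)
  -- main derivative statement on D
  have hTderiv : ∀ y : ℝ, 0 < y → y < 1 → qf y < 1 →
      HasDerivAt Tf (q' y * Real.logb 2 (Q * y ^ (m + 1) / (1 - Q - y + Q * y ^ (m + 1)))) y := by
    intro y hy0 hy1 hq1
    have h1y : (0 : ℝ) < 1 - y := by linarith
    have h1q : (0 : ℝ) < 1 - qf y := by linarith
    have hupos : (0 : ℝ) < Q * y ^ (m + 1) / (1 - y) := by positivity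
    have hvpos : (0 : ℝ) < (1 - y) / y := by positivity
    have hq := hqderiv y hy0 hy1
    have t1 : HasDerivAt (fun y => (1 - qf y) * Real.log (1 - qf y))
        (-q' y * Real.log (1 - qf y) + (1 - qf y) * (-q' y / (1 - qf y))) y :=
      (hq.const_sub 1).mul ((hq.const_sub 1).log h1q.ne')
    have hu : HasDerivAt (fun y : ℝ => Q * y ^ (m + 1) / (1 - y))
        ((Q * (((m : ℝ) + 1) * y ^ m) * (1 - y) - Q * y ^ (m + 1) * (-1)) / (1 - y) ^ 2) y := by
      have hnum : HasDerivAt (fun y : ℝ => Q * y ^ (m + 1)) (Q * (((m : ℝ) + 1) * y ^ m)) y := by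
        have := (hasDerivAt_pow (m + 1) y).const_mul Q
        push_cast at this
        simpa using this
      have hden : HasDerivAt (fun y : ℝ => 1 - y) (-1 : ℝ) y := by
        simpa using (hasDerivAt_id y).const_sub 1
      exact hnum.div hden h1y.ne'
    have t2 : HasDerivAt (fun y => qf y * Real.log (Q * y ^ (m + 1) / (1 - y)))
        (q' y * Real.log (Q * y ^ (m + 1) / (1 - y)) +
          qf y * (((Q * (((m : ℝ) + 1) * y ^ m) * (1 - y) - Q * y ^ (m + 1) * (-1)) / (1 - y) ^ 2)
            / (Q * y ^ (m + 1) / (1 - y)))) y :=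
      hq.mul (hu.log hupos.ne')
    have hv : HasDerivAt (fun y : ℝ => (1 - y) / y) ((-1 * y - (1 - y) * 1) / y ^ 2) y := by
      have hden : HasDerivAt (fun y : ℝ => 1 - y) (-1 : ℝ) y := by
        simpa using (hasDerivAt_id y).const_sub 1
      exact hden.div (hasDerivAt_id y) hy0.ne'
    have t3 : HasDerivAt (fun y => ((m : ℝ) + 1) * Q * Real.log ((1 - y) / y))
        (((m : ℝ) + 1) * Q * (((-1 * y - (1 - y) * 1) / y ^ 2) / ((1 - y) / y))) y :=
      (hv.log hvpos.ne').const_mul (((m : ℝ) + 1) * Q)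
    have hTf' : Tf = fun y =>
        ((1 - qf y) * Real.log (1 - qf y) + qf y * Real.log (Q * y ^ (m + 1) / (1 - y))
          + ((m : ℝ) + 1) * Q * Real.log ((1 - y) / y)) / Real.log 2
          + ((m : ℕ) + 1 : ℝ) * binH Q := by
      funext z
      rw [hTf]
      simp only [Real.logb]
      push_cast
      ring
    rw [hTf']
    have hT := (((t1.add t2).add t3).div_const (Real.log 2)).add_const (((m : ℕ) + 1 : ℝ) * binH Q)
    refine HasDerivAt.congr_deriv hT ?_
    symm
    have hdeq : 1 - Q - y + Q * y ^ (m + 1) = (1 - qf y) * (1 - y) := by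
      rw [hqf]; field_simp; ring
    have hlogr : Real.log (Q * y ^ (m + 1) / (1 - Q - y + Q * y ^ (m + 1)))
        = Real.log (Q * y ^ (m + 1) / (1 - y)) - Real.log (1 - qf y) := by
      rw [hdeq, show Q * y ^ (m + 1) / ((1 - qf y) * (1 - y))
          = (Q * y ^ (m + 1) / (1 - y)) / (1 - qf y) by rw [div_div]; ring_nf]
      exact Real.log_div hupos.ne' h1q.ne'
    rw [Real.logb, hlogr]
    have h2 : (1 - qf y) * (-q' y / (1 - qf y)) = -q' y := by
      rw [mul_div_assoc', mul_div_cancel_left₀ _ h1q.ne']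
    have key : qf y * (((Q * (((m : ℝ) + 1) * y ^ m) * (1 - y) - Q * y ^ (m + 1) * (-1)) / (1 - y) ^ 2)
            / (Q * y ^ (m + 1) / (1 - y)))
        + ((m : ℝ) + 1) * Q * (((-1 * y - (1 - y) * 1) / y ^ 2) / ((1 - y) / y)) = q' y := by
      rw [hqf, hq']
      rw [show y ^ (m + 1) = y ^ m * y from pow_succ y m]
      field_simp
      ring
    rw [h2]
    linear_combination (-1 / Real.log 2) * key
  -- qf is continuous on (0,1), D is open
  have hqcont : ContinuousOn qf (Set.Ioo (0:ℝ) 1) := fun y hy =>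
    ((hqderiv y hy.1 hy.2).continuousAt).continuousWithinAt
  have hDopen : IsOpen {y : ℝ | y ∈ Set.Ioo (0:ℝ) 1 ∧ qf y < 1} := by
    have hset : {y : ℝ | y ∈ Set.Ioo (0:ℝ) 1 ∧ qf y < 1}
        = Set.Ioo (0:ℝ) 1 ∩ qf ⁻¹' (Set.Iio 1) := by
      ext z; simp [Set.mem_Iio]
    rw [hset]
    exact hqcont.isOpen_inter_preimage isOpen_Ioo isOpen_Iio
  -- polynomial form and monotonicity of qf
  have hpoly : ∀ z : ℝ, z ≠ 1 → qf z = Q * ∑ i ∈ range (m + 1), z ^ i := by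
    intro z hz
    rw [hqf, show (1:ℝ) - z ^ (m + 1) = (∑ i ∈ range (m + 1), z ^ i) * (1 - z) from by
      linear_combination geom_sum_mul z (m + 1)]
    rw [← mul_assoc, mul_div_cancel_right₀ _ (sub_ne_zero.2 (Ne.symm hz))]
  have hqmono : ∀ a b : ℝ, 0 ≤ a → a ≤ b → b < 1 → qf a ≤ qf b := by
    intro a b ha hab hb1
    rw [hpoly a (by linarith), hpoly b (by linarith)]
    refine mul_le_mul_of_nonneg_left (Finset.sum_le_sum fun i _ => ?_) hQ0.le
    exact pow_le_pow_left₀ ha hab i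
  -- 1 - Q is in D
  have h1Q0 : (0:ℝ) < 1 - Q := by linarith
  have h1Q1 : (1:ℝ) - Q < 1 := by linarith
  have hqf1Q : qf (1 - Q) = 1 - (1 - Q) ^ (m + 1) := by
    rw [hqf, show (1:ℝ) - (1 - Q) = Q by ring, mul_comm, mul_div_assoc, div_self hQ0.ne',
      mul_one]
  have h1Qmem : (1 - Q) ∈ {y : ℝ | y ∈ Set.Ioo (0:ℝ) 1 ∧ qf y < 1} := by
    refine ⟨⟨h1Q0, h1Q1⟩, ?_⟩
    rw [hqf1Q]
    have := pow_pos h1Q0 (m + 1)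
    linarith
  -- sign of the logb factor
  have hdpos : ∀ y : ℝ, 0 < y → y < 1 → qf y < 1 → 0 < 1 - Q - y + Q * y ^ (m + 1) := by
    intro y hy0 hy1 hq1
    have h1y : (1:ℝ) - y ≠ 0 := by linarith
    have hdeq : 1 - Q - y + Q * y ^ (m + 1) = (1 - qf y) * (1 - y) := by
      rw [hqf]; field_simp; ring
    rw [hdeq]
    exact mul_pos (by linarith) (by linarith)
  have hlogneg : ∀ y : ℝ, 0 < y → y < 1 → qf y < 1 → y < 1 - Q →
      Real.logb 2 (Q * y ^ (m + 1) / (1 - Q - y + Q * y ^ (m + 1))) < 0 := by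
    intro y hy0 hy1 hq1 hylt
    have hd := hdpos y hy0 hy1 hq1
    have hrpos : 0 < Q * y ^ (m + 1) / (1 - Q - y + Q * y ^ (m + 1)) := by positivity
    have hr1 : Q * y ^ (m + 1) / (1 - Q - y + Q * y ^ (m + 1)) < 1 :=
      (div_lt_one hd).2 (by linarith)
    exact Real.logb_neg (by norm_num) hrpos hr1
  have hlogpos : ∀ y : ℝ, 0 < y → y < 1 → qf y < 1 → 1 - Q < y →
      0 < Real.logb 2 (Q * y ^ (m + 1) / (1 - Q - y + Q * y ^ (m + 1))) := by
    intro y hy0 hy1 hq1 hylt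
    have hd := hdpos y hy0 hy1 hq1
    have hr1 : 1 < Q * y ^ (m + 1) / (1 - Q - y + Q * y ^ (m + 1)) :=
      (one_lt_div hd).2 (by linarith)
    exact Real.logb_pos (by norm_num) hr1
  -- interiors and convexity
  have hS1conv : Convex ℝ ({y : ℝ | y ∈ Set.Ioo (0:ℝ) 1 ∧ qf y < 1} ∩ Set.Ioc 0 (1 - Q)) := by
    rw [convex_iff_ordConnected]
    constructor
    intro x hx z hz w hw
    obtain ⟨⟨⟨hx0, hx1⟩, _⟩, _, hxQ⟩ := hx
    obtain ⟨⟨⟨hz0, hz1⟩, hzq⟩, _, hzQ⟩ := hz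
    obtain ⟨hw1, hw2⟩ := hw
    refine ⟨⟨⟨by linarith, by linarith⟩, ?_⟩, by linarith, by linarith⟩
    calc qf w ≤ qf z := hqmono w z (by linarith) hw2 hz1
      _ < 1 := hzq
  have hS2conv : Convex ℝ ({y : ℝ | y ∈ Set.Ioo (0:ℝ) 1 ∧ qf y < 1} ∩ Set.Ico (1 - Q) 1) := by
    rw [convex_iff_ordConnected]
    constructor
    intro x hx z hz w hw
    obtain ⟨⟨⟨hx0, hx1⟩, _⟩, hxQ, _⟩ := hx
    obtain ⟨⟨⟨hz0, hz1⟩, hzq⟩, hzQ, _⟩ := hz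
    obtain ⟨hw1, hw2⟩ := hw
    refine ⟨⟨⟨by linarith, by linarith⟩, ?_⟩, by linarith, by linarith⟩
    calc qf w ≤ qf z := hqmono w z (by linarith) hw2 hz1
      _ < 1 := hzq
  have hTcont : ∀ y ∈ {y : ℝ | y ∈ Set.Ioo (0:ℝ) 1 ∧ qf y < 1}, ContinuousAt Tf y := by
    intro y hy
    exact (hTderiv y hy.1.1 hy.1.2 hy.2).continuousAt
  have hTd : ∀ y ∈ {y : ℝ | y ∈ Set.Ioo (0:ℝ) 1 ∧ qf y < 1},
      deriv Tf y = q' y * Real.logb 2 (Q * y ^ (m + 1) / (1 - Q - y + Q * y ^ (m + 1))) :=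
    fun y hy => (hTderiv y hy.1.1 hy.1.2 hy.2).deriv
  -- strict antitonicity
  have hanti : StrictAntiOn Tf
      ({y : ℝ | y ∈ Set.Ioo (0:ℝ) 1 ∧ qf y < 1} ∩ Set.Ioc 0 (1 - Q)) := by
    refine strictAntiOn_of_deriv_neg hS1conv
      (fun y hy => (hTcont y hy.1).continuousWithinAt) (fun y hy => ?_)
    rw [interior_inter, hDopen.interior_eq, interior_Ioc] at hy
    obtain ⟨hyD, hy0, hy1⟩ := hy
    rw [hTd y hyD]
    exact mul_neg_of_pos_of_neg (hq'pos y hyD.1.1 hyD.1.2)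
      (hlogneg y hyD.1.1 hyD.1.2 hyD.2 hy1)
  have hmono : StrictMonoOn Tf
      ({y : ℝ | y ∈ Set.Ioo (0:ℝ) 1 ∧ qf y < 1} ∩ Set.Ico (1 - Q) 1) := by
    refine strictMonoOn_of_deriv_pos hS2conv
      (fun y hy => (hTcont y hy.1).continuousWithinAt) (fun y hy => ?_)
    rw [interior_inter, hDopen.interior_eq, interior_Ico] at hy
    obtain ⟨hyD, hy0, hy1⟩ := hy
    rw [hTd y hyD]
    exact mul_pos (hq'pos y hyD.1.1 hyD.1.2)
      (hlogpos y hyD.1.1 hyD.1.2 hyD.2 hy0)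
  -- value at 1 - Q
  have hT0 : Tf (1 - Q) = 0 := by
    have hapos : (0:ℝ) < 1 - Q := h1Q0
    rw [hTf, hqf1Q, show (1:ℝ) - (1 - (1 - Q) ^ (m + 1)) = (1 - Q) ^ (m + 1) by ring,
      show (1:ℝ) - (1 - Q) = Q by ring,
      show Q * (1 - Q) ^ (m + 1) / Q = (1 - Q) ^ (m + 1) by
        rw [mul_comm, mul_div_assoc, div_self hQ0.ne', mul_one],
      Real.logb_pow, Real.logb_div hQ0.ne' hapos.ne']
    unfold binH
    push_cast
    ring
  refine ⟨?_, hanti, hmono, hT0, ?_⟩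
  · intro y hy
    rw [(hqderiv y hy.1.1 hy.1.2).deriv]
    exact hTderiv y hy.1.1 hy.1.2 hy.2
  · intro y hy
    rcases lt_trichotomy y (1 - Q) with h | h | h
    · have := hanti ⟨hy, hy.1.1, h.le⟩ ⟨h1Qmem, h1Q0, le_refl _⟩ h
      rw [hT0] at this
      exact this.le
    · rw [h, hT0]
    · have := hmono ⟨h1Qmem, le_refl _, h1Q1⟩ ⟨hy, h.le, hy.1.2⟩ h
      rw [hT0] at this
      exact this.le
end
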